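/- arXiv:1409.4494 — 6 statements merged into one kernel-verified Lean document; each statement's English description precedes it below -/
import Mathlib

section
/- Let x ∈ ℝ and define the sequence (D_n)_{n≥0} by D_0 = 1, D_1 = 1 + x, and D_{n+1} = (x + n + 1) D_n − n x D_{n−1} for n ≥ 1. Then for every N ≥ 0, D_N = N! · Σ_{n=0}^{N} x^n/n!, i.e. D_N equals N! times the N-th partial sum of the exponential series at x. -/
/-- Chalker–Mehlig recursion for the tridiagonal determinant `D_N(σ⁻², z)` (with
`x = σ⁻²|z|²`): its solution is `N!` times the `N`-th partial sum of the
exponential series at `x`. -/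
theorem ginibre_D_recursion_solution (x : ℝ) (D : ℕ → ℝ)
    (h0 : D 0 = 1) (h1 : D 1 = 1 + x)
    (hrec : ∀ n : ℕ, 1 ≤ n → D (n + 1) = (x + n + 1) * D n - n * x * D (n - 1)) :
    ∀ N : ℕ, D N = (Nat.factorial N : ℝ) * ∑ n ∈ Finset.range (N + 1),
      x ^ n / (Nat.factorial n : ℝ) := by
  intro N
  induction N using Nat.twoStepInduction with
  | zero => simp [h0]
  | one => simp [h1, Finset.sum_range_succ, Nat.factorial]
  | more n ih1 ih2 =>
    have hn1 : 1 ≤ n + 1 := Nat.le_add_left 1 n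
    rw [hrec (n + 1) hn1]
    simp only [Nat.add_sub_cancel] at *
    rw [ih1, ih2]
    simp only [Finset.sum_range_succ]
    have hfn : (Nat.factorial n : ℝ) ≠ 0 := Nat.cast_ne_zero.mpr n.factorial_ne_zero
    have hfn1 : (Nat.factorial (n + 1) : ℝ) ≠ 0 := Nat.cast_ne_zero.mpr (n + 1).factorial_ne_zero
    have hfn2 : (Nat.factorial (n + 2) : ℝ) ≠ 0 := Nat.cast_ne_zero.mpr (n + 2).factorial_ne_zero
    have e1 : (Nat.factorial (n + 1) : ℝ) = (n + 1) * Nat.factorial n := by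
      rw [Nat.factorial_succ]; push_cast; ring
    have e2 : (Nat.factorial (n + 2) : ℝ) = (n + 2) * Nat.factorial (n + 1) := by
      rw [Nat.factorial_succ (n + 1)]; push_cast; ring
    rw [e2, e1]
    field_simp
    push_cast
    ring
end

section
/- Let x ∈ ℝ and define the sequence (G_n)_{n≥0} by G_0 = 1, G_1 = 2 + x, and G_{n+1} = (x + n + 2) G_n − n x G_{n−1} for n ≥ 1. Then for every N ≥ 1, G_{N−1} = (N−1)! · Σ_{n=0}^{N−1} (N − n) x^n/n!. -/
noncomputable def ginibreE (x : ℝ) (m : ℕ) : ℝ :=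
  ∑ n ∈ Finset.range (m + 1), x ^ n / (Nat.factorial n : ℝ)

noncomputable def ginibreS (x : ℝ) (m : ℕ) : ℝ :=
  ∑ n ∈ Finset.range (m + 1), ((m : ℝ) + 1 - n) * x ^ n / (Nat.factorial n : ℝ)

lemma ginibreE_succ (x : ℝ) (m : ℕ) :
    ginibreE x (m + 1) = ginibreE x m + x ^ (m + 1) / (Nat.factorial (m + 1) : ℝ) := by
  simp [ginibreE, Finset.sum_range_succ]

lemma ginibreS_succ (x : ℝ) (m : ℕ) :
    ginibreS x (m + 1) = ginibreS x m + ginibreE x (m + 1) := by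
  unfold ginibreS ginibreE
  have h : ∀ n ∈ Finset.range (m + 2),
      ((m + 1 : ℕ) + 1 - (n : ℝ)) * x ^ n / (Nat.factorial n : ℝ)
        = ((m : ℝ) + 1 - n) * x ^ n / (Nat.factorial n : ℝ) + x ^ n / (Nat.factorial n : ℝ) := by
    intro n _
    push_cast
    ring
  rw [Finset.sum_congr rfl h, Finset.sum_add_distrib]
  congr 1
  rw [Finset.sum_range_succ]
  push_cast
  ring

lemma ginibreS_eq (x : ℝ) (m : ℕ) :
    ginibreS x m = ((m : ℝ) + 1) * ginibreE x (m + 1) - x * ginibreE x m := by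
  induction m with
  | zero => simp [ginibreS, ginibreE, Finset.sum_range_succ]
  | succ k ih =>
      rw [ginibreS_succ, ih, ginibreE_succ x (k + 1)]
      have h1 : ginibreE x (k + 1) = ginibreE x k + x ^ (k + 1) / (Nat.factorial (k + 1) : ℝ) :=
        ginibreE_succ x k
      have hf : (Nat.factorial (k + 2) : ℝ) = (k + 2) * Nat.factorial (k + 1) := by
        rw [Nat.factorial_succ]; push_cast; ring
      have hne : (Nat.factorial (k + 1) : ℝ) ≠ 0 := by positivity
      have hne2 : (Nat.factorial (k + 2) : ℝ) ≠ 0 := by positivity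
      rw [h1, Nat.factorial_succ (k + 1)]
      push_cast
      field_simp [h1, hf]
      ring

/-- Chalker–Mehlig recursion for the tridiagonal determinant `G` arising in the
diagonal overlap density `O_N^{(1)}` of the complex Ginibre ensemble (with
`x = N|z|²`): the exact solution of the recursion. -/
theorem ginibre_G_recursion_solution (x : ℝ) (G : ℕ → ℝ)
    (h0 : G 0 = 1) (h1 : G 1 = 2 + x)
    (hrec : ∀ n : ℕ, 1 ≤ n → G (n + 1) = (x + n + 2) * G n - n * x * G (n - 1)) :
    ∀ N : ℕ, 1 ≤ N → G (N - 1) = (Nat.factorial (N - 1) : ℝ) *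
      ∑ n ∈ Finset.range N, ((N : ℝ) - n) * x ^ n / (Nat.factorial n : ℝ) := by
  have main : ∀ m : ℕ, G m = (Nat.factorial m : ℝ) * ginibreS x m := by
    intro m
    induction m using Nat.twoStepInduction with
    | zero => simp [h0, ginibreS]
    | one =>
        rw [h1]
        simp [ginibreS, Finset.sum_range_succ, Nat.factorial]
        ring
    | more k ih1 ih2 =>
        have hr := hrec (k + 1) (by omega)
        simp only [Nat.add_sub_cancel] at hr
        rw [hr, ih1, ih2]
        have hkey : ginibreS x (k + 1)
            = ((k : ℝ) + 2) * ginibreE x (k + 2) - x * ginibreE x (k + 1) := by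
          have := ginibreS_eq x (k + 1)
          push_cast at this ⊢
          linarith [this]
        have hs2 : ginibreS x (k + 2) = ginibreS x (k + 1) + ginibreE x (k + 2) :=
          ginibreS_succ x (k + 1)
        have hs1 : ginibreS x (k + 1) = ginibreS x k + ginibreE x (k + 1) :=
          ginibreS_succ x k
        rw [Nat.factorial_succ (k + 1), Nat.factorial_succ k]
        push_cast
        linear_combination (-(((k : ℝ) + 2) * ((k : ℝ) + 1) * (Nat.factorial k : ℝ))) * hs2
          + (((k : ℝ) + 1) * (Nat.factorial k : ℝ)) * hkey
          + (((k : ℝ) + 1) * (Nat.factorial k : ℝ) * x) * hs1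
  intro N hN
  obtain ⟨m, rfl⟩ : ∃ m, N = m + 1 := ⟨N - 1, by omega⟩
  simp only [Nat.add_sub_cancel]
  rw [main m]
  congr 1
  unfold ginibreS
  refine Finset.sum_congr rfl fun n _ => ?_
  push_cast
  ring
end

section
/- For every fixed z ∈ ℂ with |z| < 1, lim_{N→∞} R_N(z) = π^{−1}. -/
open Filter

/-- The one-point eigenvalue density of the `N × N` complex Ginibre ensemble. -/
noncomputable def ginibreOnePoint (N : ℕ) (z : ℂ) : ℝ :=
  Real.pi⁻¹ * Real.exp (-(N * ‖z‖ ^ 2)) *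
    ∑ n ∈ Finset.range N, (N * ‖z‖ ^ 2) ^ n / (Nat.factorial n : ℝ)

lemma real_exp_tsum (t : ℝ) : Real.exp t = ∑' n : ℕ, t ^ n / n.factorial := by
  rw [Real.exp_eq_exp_ℝ, NormedSpace.exp_eq_tsum_div]

lemma single_le_exp {t : ℝ} (ht : 0 ≤ t) (n : ℕ) : t ^ n / n.factorial ≤ Real.exp t := by
  calc t ^ n / n.factorial ≤ ∑ i ∈ Finset.range (n + 1), t ^ i / i.factorial := by
        refine Finset.single_le_sum (f := fun i : ℕ => t ^ i / (i.factorial : ℝ)) ?_ ?_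
        · intro i _
          positivity
        · simp
    _ ≤ Real.exp t := Real.sum_le_exp_of_nonneg ht _

/-- Tail bound for the exponential series. -/
lemma tail_bound {r : ℝ} (hr0 : 0 ≤ r) (hr1 : r < 1) {N : ℕ} (hN : 1 ≤ N) :
    Real.exp (N * r) - ∑ n ∈ Finset.range N, (N * r) ^ n / n.factorial
      ≤ (N * r) ^ N / N.factorial * (1 - r)⁻¹ := by
  set t : ℝ := N * r with ht
  have ht0 : 0 ≤ t := by positivity
  have hsum : Summable (fun n : ℕ => t ^ n / (n.factorial : ℝ)) :=
    Real.summable_pow_div_factorial t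
  have hsplit := (Summable.sum_add_tsum_nat_add N hsum)
  have key : ∀ k : ℕ, t ^ (k + N) / ((k + N).factorial : ℝ)
      ≤ t ^ N / N.factorial * r ^ k := by
    intro k
    induction k with
    | zero => simp
    | succ k ih =>
      have hfac : ((k + N).factorial : ℝ) * (N : ℝ) ≤ ((k + 1 + N).factorial : ℝ) := by
        have : (k + 1 + N).factorial = (k + N + 1) * (k + N).factorial := by
          rw [show k + 1 + N = (k + N) + 1 by ring, Nat.factorial_succ]
        rw [this]
        push_cast
        have hNle : (N : ℝ) ≤ (k : ℝ) + N + 1 := by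
          have : (0:ℝ) ≤ (k : ℝ) := by positivity
          linarith
        have hfacpos : (0:ℝ) < ((k + N).factorial : ℝ) := by
          exact_mod_cast (k + N).factorial_pos
        nlinarith
      have hfacpos : (0:ℝ) < ((k + N).factorial : ℝ) := by
        exact_mod_cast (k + N).factorial_pos
      have hfacpos' : (0:ℝ) < ((k + 1 + N).factorial : ℝ) := by
        exact_mod_cast (k + 1 + N).factorial_pos
      have hNpos : (0:ℝ) < (N : ℝ) := by exact_mod_cast hN
      have step : t ^ (k + 1 + N) / ((k + 1 + N).factorial : ℝ)
          ≤ t ^ (k + N) / ((k + N).factorial : ℝ) * r := by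
        rw [div_le_iff₀ hfacpos']
        have h1 : t ^ (k + 1 + N) = t ^ (k + N) * ((N : ℝ) * r) := by
          rw [show k + 1 + N = (k + N) + 1 by ring, pow_succ, ht]
        rw [h1]
        have htpow : (0:ℝ) ≤ t ^ (k + N) := by positivity
        calc t ^ (k + N) * ((N : ℝ) * r)
            = (t ^ (k + N) / ((k + N).factorial : ℝ) * r) * (((k + N).factorial : ℝ) * N) := by
              field_simp
          _ ≤ (t ^ (k + N) / ((k + N).factorial : ℝ) * r) * ((k + 1 + N).factorial : ℝ) := by
              apply mul_le_mul_of_nonneg_left hfac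
              positivity
      calc t ^ (k + 1 + N) / ((k + 1 + N).factorial : ℝ)
          ≤ t ^ (k + N) / ((k + N).factorial : ℝ) * r := step
        _ ≤ t ^ N / N.factorial * r ^ k * r := by
            apply mul_le_mul_of_nonneg_right ih hr0
        _ = t ^ N / N.factorial * r ^ (k + 1) := by ring
  have hgeo : Summable (fun k : ℕ => t ^ N / N.factorial * r ^ k) :=
    (summable_geometric_of_lt_one hr0 hr1).mul_left _
  have htail : (∑' k : ℕ, t ^ (k + N) / ((k + N).factorial : ℝ))
      ≤ ∑' k : ℕ, t ^ N / N.factorial * r ^ k := by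
    refine Summable.tsum_le_tsum key ?_ hgeo
    exact (summable_nat_add_iff N).2 hsum
  have hgeosum : (∑' k : ℕ, t ^ N / N.factorial * r ^ k)
      = t ^ N / N.factorial * (1 - r)⁻¹ := by
    rw [tsum_mul_left, tsum_geometric_of_lt_one hr0 hr1]
  have : Real.exp t = ∑ n ∈ Finset.range N, t ^ n / n.factorial
      + ∑' k : ℕ, t ^ (k + N) / ((k + N).factorial : ℝ) := by
    rw [real_exp_tsum t, ← hsplit]
  rw [this]
  linarith [htail, hgeosum.le]

/-- In the bulk `|z| < 1`, the Ginibre one-point density converges to `π⁻¹`. -/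
theorem ginibre_onePoint_bulk_limit (z : ℂ) (hz : ‖z‖ < 1) :
    Tendsto (fun N : ℕ => ginibreOnePoint N z) atTop (nhds Real.pi⁻¹) := by
  set r : ℝ := ‖z‖ ^ 2 with hrdef
  have hr0 : 0 ≤ r := by positivity
  have hr1 : r < 1 := by
    have h0 : 0 ≤ ‖z‖ := norm_nonneg z
    nlinarith
  -- q = r * exp (1 - r) < 1
  set q : ℝ := r * Real.exp (1 - r) with hqdef
  have hq0 : 0 ≤ q := by positivity
  have hq1 : q < 1 := by
    rcases eq_or_lt_of_le hr0 with h | h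
    · simp [hqdef, ← h]
    · have hlog : Real.log r < r - 1 := by
        apply Real.log_lt_sub_one_of_pos h
        linarith
      have : Real.log q = Real.log r + (1 - r) := by
        rw [hqdef, Real.log_mul (ne_of_gt h) (Real.exp_ne_zero _), Real.log_exp]
      have hlq : Real.log q < 0 := by rw [this]; linarith
      have : q = Real.exp (Real.log q) := (Real.exp_log (by positivity)).symm
      rw [this]
      calc Real.exp (Real.log q) < Real.exp 0 := Real.exp_lt_exp.2 hlq
        _ = 1 := Real.exp_zero
  -- main convergence of the exp-sum product to 1
  have hmain : Tendsto (fun N : ℕ =>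
      Real.exp (-(N * r)) * ∑ n ∈ Finset.range N, (N * r) ^ n / n.factorial)
      atTop (nhds 1) := by
    have hub : ∀ N : ℕ,
        Real.exp (-(N * r)) * ∑ n ∈ Finset.range N, (N * r) ^ n / n.factorial ≤ 1 := by
      intro N
      have hsle : (∑ n ∈ Finset.range N, (N * r) ^ n / n.factorial : ℝ)
          ≤ Real.exp (N * r) := Real.sum_le_exp_of_nonneg (by positivity) _
      have := mul_le_mul_of_nonneg_left hsle (Real.exp_pos (-(N * r))).le
      rwa [← Real.exp_add, neg_add_cancel, Real.exp_zero] at this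
    have hlb : ∀ N : ℕ, 1 ≤ N →
        1 - (1 - r)⁻¹ * q ^ N ≤
          Real.exp (-(N * r)) * ∑ n ∈ Finset.range N, (N * r) ^ n / n.factorial := by
      intro N hN
      have htb := tail_bound hr0 hr1 hN
      have hpb : ((N : ℝ) * r) ^ N / N.factorial ≤ Real.exp N * r ^ N := by
        have h1 : ((N : ℝ)) ^ N / N.factorial ≤ Real.exp N :=
          single_le_exp (by positivity) N
        have : ((N : ℝ) * r) ^ N / N.factorial
            = ((N : ℝ)) ^ N / N.factorial * r ^ N := by
          rw [mul_pow]; ring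
        rw [this]
        exact mul_le_mul_of_nonneg_right h1 (by positivity)
      have hepos : (0:ℝ) < Real.exp (-(N * r)) := Real.exp_pos _
      have hinv : (0:ℝ) < (1 - r)⁻¹ := by
        apply inv_pos.2; linarith
      have key : Real.exp (-(N * r)) *
          (Real.exp (N * r) - ∑ n ∈ Finset.range N, (N * r) ^ n / n.factorial)
          ≤ (1 - r)⁻¹ * q ^ N := by
        calc Real.exp (-(N * r)) *
              (Real.exp (N * r) - ∑ n ∈ Finset.range N, (N * r) ^ n / n.factorial)
            ≤ Real.exp (-(N * r)) * (((N : ℝ) * r) ^ N / N.factorial * (1 - r)⁻¹) :=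
              mul_le_mul_of_nonneg_left htb hepos.le
          _ ≤ Real.exp (-(N * r)) * (Real.exp N * r ^ N * (1 - r)⁻¹) := by
              apply mul_le_mul_of_nonneg_left _ hepos.le
              exact mul_le_mul_of_nonneg_right hpb hinv.le
          _ = (1 - r)⁻¹ * (Real.exp (-(N * r)) * Real.exp N * r ^ N) := by ring
          _ = (1 - r)⁻¹ * q ^ N := by
              congr 1
              rw [hqdef, mul_pow, ← Real.exp_nat_mul, ← Real.exp_add]
              ring_nf
      have hexp : Real.exp (-(N * r)) * Real.exp (N * r) = 1 := by
        rw [← Real.exp_add, neg_add_cancel, Real.exp_zero]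
      nlinarith [key, hexp]
    -- squeeze
    have h1 : Tendsto (fun N : ℕ => 1 - (1 - r)⁻¹ * q ^ N) atTop (nhds 1) := by
      have := (tendsto_pow_atTop_nhds_zero_of_lt_one hq0 hq1).const_mul ((1 - r)⁻¹)
      have h2 := (tendsto_const_nhds (x := (1:ℝ)) (f := atTop)).sub this
      simpa using h2
    refine tendsto_of_tendsto_of_tendsto_of_le_of_le' h1 tendsto_const_nhds ?_ ?_
    · filter_upwards [eventually_ge_atTop 1] with N hN using hlb N hN
    · filter_upwards with N using hub N
  have : Tendsto (fun N : ℕ => Real.pi⁻¹ *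
      (Real.exp (-(N * r)) * ∑ n ∈ Finset.range N, (N * r) ^ n / n.factorial))
      atTop (nhds (Real.pi⁻¹ * 1)) := hmain.const_mul _
  simpa [ginibreOnePoint, mul_assoc, hrdef] using this
end

section
/- The measures R_N(z) d²z converge weakly to the circular law: for every continuous compactly supported function f : ℂ → ℝ, lim_{N→∞} ∫_ℂ f(z) R_N(z) d²z = π^{−1} ∫_{|z| ≤ 1} f(z) d²z, where d²z denotes Lebesgue measure on ℂ ≅ ℝ². -/
open Filter MeasureTheory Finset

private lemma fact_le_pow_mul : ∀ (d n : ℕ), (n + d).factorial ≤ n.factorial * (n + d) ^ d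
  | 0, n => by simp
  | d + 1, n => by
    have h1 : (n + (d + 1)).factorial = (n + d + 1) * (n + d).factorial := by
      rw [← Nat.add_assoc, Nat.factorial_succ]
    rw [h1]
    calc (n + d + 1) * (n + d).factorial
        ≤ (n + d + 1) * (n.factorial * (n + d) ^ d) :=
          Nat.mul_le_mul_left _ (fact_le_pow_mul d n)
      _ ≤ (n + d + 1) * (n.factorial * (n + d + 1) ^ d) := by
          apply Nat.mul_le_mul_left
          exact Nat.mul_le_mul_left _ (Nat.pow_le_pow_left (Nat.le_succ _) d)
      _ = n.factorial * (n + (d + 1)) ^ (d + 1) := by ring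

private lemma key_exp_bound (N : ℕ) (x : ℝ) (hx : 0 ≤ x) :
    Real.exp (-(N * x)) * ((N * x) ^ N / (Nat.factorial N : ℝ)) ≤
      (x * Real.exp (1 - x)) ^ N := by
  have hfac : (0:ℝ) < (Nat.factorial N : ℝ) := by exact_mod_cast N.factorial_pos
  have hN : ((N:ℝ)) ^ N / (Nat.factorial N : ℝ) ≤ Real.exp N := by
    refine le_trans ?_ (Real.sum_le_exp_of_nonneg (Nat.cast_nonneg N) (N + 1))
    have : ((N:ℝ)) ^ N / (Nat.factorial N : ℝ) =
        (fun i => (N:ℝ) ^ i / (Nat.factorial i : ℝ)) N := rfl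
    rw [this]
    exact Finset.single_le_sum (f := fun i => (N:ℝ) ^ i / (Nat.factorial i : ℝ))
      (fun i _ => by positivity) (Finset.self_mem_range_succ N)
  have hrhs : (x * Real.exp (1 - x)) ^ N = x ^ N * (Real.exp N * Real.exp (-(N * x))) := by
    rw [mul_pow, ← Real.exp_nat_mul, ← Real.exp_add]
    ring_nf
  rw [hrhs, mul_pow]
  have h2 : Real.exp (-(N * x)) * ((N:ℝ) ^ N * x ^ N / (Nat.factorial N : ℝ)) =
      x ^ N * ((N:ℝ) ^ N / (Nat.factorial N : ℝ)) * Real.exp (-(N * x)) := by ring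
  rw [h2]
  calc x ^ N * ((N:ℝ) ^ N / (Nat.factorial N : ℝ)) * Real.exp (-(N * x))
      ≤ x ^ N * Real.exp N * Real.exp (-(N * x)) := by
        apply mul_le_mul_of_nonneg_right _ (Real.exp_pos _).le
        exact mul_le_mul_of_nonneg_left hN (by positivity)
    _ = x ^ N * (Real.exp N * Real.exp (-(N * x))) := by ring

private lemma ratio_lt_one {x : ℝ} (hx : 0 ≤ x) (hne : x ≠ 1) :
    x * Real.exp (1 - x) < 1 := by
  have h := Real.add_one_lt_exp (x := x - 1) (by intro h; apply hne; linarith)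
  have hpos : (0:ℝ) < Real.exp (1 - x) := Real.exp_pos _
  calc x * Real.exp (1 - x) < Real.exp (x - 1) * Real.exp (1 - x) :=
        mul_lt_mul_of_pos_right (by linarith) hpos
    _ = 1 := by rw [← Real.exp_add]; norm_num

private lemma tendsto_S_lt {x : ℝ} (hx0 : 0 ≤ x) (hx : x < 1) :
    Tendsto (fun N : ℕ => Real.exp (-(N * x)) *
      ∑ n ∈ Finset.range N, (N * x) ^ n / (Nat.factorial n : ℝ)) atTop (nhds 1) := by
  set r : ℝ := x * Real.exp (1 - x) with hr
  have hr0 : 0 ≤ r := by positivity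
  have hr1 : r < 1 := ratio_lt_one hx0 (ne_of_lt hx)
  have hrp : Tendsto (fun N : ℕ => 1 - (1 - x)⁻¹ * r ^ N) atTop (nhds 1) := by
    have := (tendsto_pow_atTop_nhds_zero_of_lt_one hr0 hr1).const_mul ((1 - x)⁻¹)
    have h2 := this.const_sub 1
    simpa using h2
  refine tendsto_of_tendsto_of_tendsto_of_le_of_le hrp tendsto_const_nhds ?_ ?_
  · -- lower bound: 1 - (1-x)⁻¹ r^N ≤ S N
    intro N
    have hNx : (0:ℝ) ≤ N * x := by positivity
    have hsum : Summable (fun n : ℕ => ((N:ℝ) * x) ^ n / (Nat.factorial n : ℝ)) :=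
      Real.summable_pow_div_factorial _
    have hexp : Real.exp ((N:ℝ) * x) = ∑' n : ℕ, ((N:ℝ) * x) ^ n / (Nat.factorial n : ℝ) := by
      rw [Real.exp_eq_exp_ℝ, NormedSpace.exp_eq_tsum_div]
    have hsplit := hsum.sum_add_tsum_nat_add N
    -- tail term bound
    have hterm : ∀ k : ℕ, ((N:ℝ) * x) ^ (k + N) / (Nat.factorial (k + N) : ℝ) ≤
        (((N:ℝ) * x) ^ N / (Nat.factorial N : ℝ)) * x ^ k := by
      intro k
      have hfac1 : (0:ℝ) < (Nat.factorial (k + N) : ℝ) := by exact_mod_cast (k + N).factorial_pos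
      have hfac2 : (0:ℝ) < (Nat.factorial N : ℝ) := by exact_mod_cast N.factorial_pos
      rw [div_mul_eq_mul_div, div_le_div_iff₀ hfac1 hfac2]
      have hnat : (Nat.factorial N : ℝ) * (N:ℝ) ^ k ≤ (Nat.factorial (k + N) : ℝ) := by
        have h1 : N.factorial * N ^ k ≤ N.factorial * (N + 1) ^ k :=
          Nat.mul_le_mul_left _ (Nat.pow_le_pow_left (Nat.le_succ N) k)
        have h2 := Nat.factorial_mul_pow_le_factorial (m := N) (n := k)
        have := le_trans h1 h2
        rw [Nat.add_comm N k] at this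
        exact_mod_cast this
      calc ((N:ℝ) * x) ^ (k + N) * (Nat.factorial N : ℝ)
          = (((N:ℝ) * x) ^ N * x ^ k) * ((Nat.factorial N : ℝ) * (N:ℝ) ^ k) := by
            rw [pow_add]; ring
        _ ≤ (((N:ℝ) * x) ^ N * x ^ k) * (Nat.factorial (k + N) : ℝ) := by
            apply mul_le_mul_of_nonneg_left hnat (by positivity)
    have hshift : Summable (fun k : ℕ => ((N:ℝ) * x) ^ (k + N) / (Nat.factorial (k + N) : ℝ)) :=
      (summable_nat_add_iff N).mpr hsum
    have hgeom : Summable (fun k : ℕ => (((N:ℝ) * x) ^ N / (Nat.factorial N : ℝ)) * x ^ k) :=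
      (summable_geometric_of_lt_one hx0 hx).mul_left _
    have htail : (∑' k : ℕ, ((N:ℝ) * x) ^ (k + N) / (Nat.factorial (k + N) : ℝ)) ≤
        (((N:ℝ) * x) ^ N / (Nat.factorial N : ℝ)) * (1 - x)⁻¹ := by
      calc (∑' k : ℕ, ((N:ℝ) * x) ^ (k + N) / (Nat.factorial (k + N) : ℝ))
          ≤ ∑' k : ℕ, (((N:ℝ) * x) ^ N / (Nat.factorial N : ℝ)) * x ^ k :=
            Summable.tsum_le_tsum hterm hshift hgeom
        _ = (((N:ℝ) * x) ^ N / (Nat.factorial N : ℝ)) * (1 - x)⁻¹ := by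
            rw [tsum_mul_left, tsum_geometric_of_lt_one hx0 hx]
    -- now assemble
    have hkey := key_exp_bound N x hx0
    have hE : (0:ℝ) < Real.exp (-(N * x)) := Real.exp_pos _
    have hST : Real.exp (-(N * x)) *
          (∑ n ∈ Finset.range N, ((N:ℝ) * x) ^ n / (Nat.factorial n : ℝ)) +
        Real.exp (-(N * x)) *
          (∑' k : ℕ, ((N:ℝ) * x) ^ (k + N) / (Nat.factorial (k + N) : ℝ)) = 1 := by
      rw [← mul_add, hsplit, ← hexp, ← Real.exp_add]
      simp
    have hTb : Real.exp (-(N * x)) *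
        (∑' k : ℕ, ((N:ℝ) * x) ^ (k + N) / (Nat.factorial (k + N) : ℝ)) ≤ (1 - x)⁻¹ * r ^ N := by
      calc Real.exp (-(N * x)) * ∑' k : ℕ, ((N:ℝ) * x) ^ (k + N) / (Nat.factorial (k + N) : ℝ)
          ≤ Real.exp (-(N * x)) * ((((N:ℝ) * x) ^ N / (Nat.factorial N : ℝ)) * (1 - x)⁻¹) :=
            mul_le_mul_of_nonneg_left htail hE.le
        _ = (Real.exp (-(N * x)) * (((N:ℝ) * x) ^ N / (Nat.factorial N : ℝ))) * (1 - x)⁻¹ := by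
            ring
        _ ≤ r ^ N * (1 - x)⁻¹ := by
            apply mul_le_mul_of_nonneg_right hkey
            have : (0:ℝ) < 1 - x := by linarith
            positivity
        _ = (1 - x)⁻¹ * r ^ N := by ring
    linarith [hST, hTb]
  · -- upper bound: S N ≤ 1
    intro N
    have hNx : (0:ℝ) ≤ N * x := by positivity
    have h := Real.sum_le_exp_of_nonneg hNx N
    have hE : (0:ℝ) < Real.exp (-(N * x)) := Real.exp_pos _
    calc Real.exp (-(N * x)) * ∑ n ∈ Finset.range N, ((N:ℝ) * x) ^ n / (Nat.factorial n : ℝ)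
        ≤ Real.exp (-(N * x)) * Real.exp ((N:ℝ) * x) := mul_le_mul_of_nonneg_left h hE.le
      _ = 1 := by rw [← Real.exp_add]; simp

private lemma tendsto_S_gt {x : ℝ} (hx : 1 < x) :
    Tendsto (fun N : ℕ => Real.exp (-(N * x)) *
      ∑ n ∈ Finset.range N, (N * x) ^ n / (Nat.factorial n : ℝ)) atTop (nhds 0) := by
  have hx0 : (0:ℝ) < x := by linarith
  have hxi : x⁻¹ < 1 := by rw [inv_lt_one_iff₀]; right; exact hx
  have hxi0 : (0:ℝ) ≤ x⁻¹ := by positivity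
  set r : ℝ := x * Real.exp (1 - x) with hr
  have hr0 : 0 ≤ r := by positivity
  have hr1 : r < 1 := ratio_lt_one hx0.le (by linarith)
  set C : ℝ := (1 - x⁻¹)⁻¹ with hC
  have hC0 : 0 ≤ C := by
    have : (0:ℝ) < 1 - x⁻¹ := by linarith
    positivity
  have hup : Tendsto (fun N : ℕ => C * r ^ N) atTop (nhds 0) := by
    have := (tendsto_pow_atTop_nhds_zero_of_lt_one hr0 hr1).const_mul C
    simpa using this
  refine tendsto_of_tendsto_of_tendsto_of_le_of_le tendsto_const_nhds hup ?_ ?_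
  · intro N
    have : (0:ℝ) ≤ ∑ n ∈ Finset.range N, ((N:ℝ) * x) ^ n / (Nat.factorial n : ℝ) := by
      apply Finset.sum_nonneg
      intro n _
      positivity
    positivity
  · intro N
    have hterm : ∀ n ∈ Finset.range N, ((N:ℝ) * x) ^ n / (Nat.factorial n : ℝ) ≤
        (((N:ℝ) * x) ^ N / (Nat.factorial N : ℝ)) * (x⁻¹) ^ (N - n) := by
      intro n hn
      rw [Finset.mem_range] at hn
      have hfac1 : (0:ℝ) < (Nat.factorial n : ℝ) := by exact_mod_cast n.factorial_pos
      have hfac2 : (0:ℝ) < (Nat.factorial N : ℝ) := by exact_mod_cast N.factorial_pos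
      rw [div_mul_eq_mul_div, div_le_div_iff₀ hfac1 hfac2]
      have hsplitN : ((N:ℝ) * x) ^ N = ((N:ℝ) * x) ^ n * ((N:ℝ) ^ (N - n) * x ^ (N - n)) := by
        rw [← mul_pow, ← pow_add, Nat.add_sub_cancel' hn.le]
      have hxx : x ^ (N - n) * (x⁻¹) ^ (N - n) = 1 := by
        rw [← mul_pow, mul_inv_cancel₀ (ne_of_gt hx0), one_pow]
      have hnat : (Nat.factorial N : ℝ) ≤ (Nat.factorial n : ℝ) * (N:ℝ) ^ (N - n) := by
        have h1 := fact_le_pow_mul (N - n) n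
        rw [Nat.add_sub_cancel' hn.le] at h1
        exact_mod_cast h1
      calc ((N:ℝ) * x) ^ n * (Nat.factorial N : ℝ)
          ≤ ((N:ℝ) * x) ^ n * ((Nat.factorial n : ℝ) * (N:ℝ) ^ (N - n)) :=
            mul_le_mul_of_nonneg_left hnat (by positivity)
        _ = ((N:ℝ) * x) ^ N * (x⁻¹) ^ (N - n) * (Nat.factorial n : ℝ) := by
            rw [hsplitN]
            field_simp
            rw [one_div, mul_assoc, hxx, mul_one]
    have hgsum : ∑ n ∈ Finset.range N, (x⁻¹) ^ (N - n) ≤ C := by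
      have hrefl := Finset.sum_range_reflect (fun j => (x⁻¹) ^ (N - j)) N
      rw [← hrefl]
      have hle : ∀ j ∈ Finset.range N, (x⁻¹) ^ (N - (N - 1 - j)) ≤ (x⁻¹) ^ j := by
        intro j hj
        rw [Finset.mem_range] at hj
        have hj1 : N - (N - 1 - j) = j + 1 := by omega
        rw [hj1, pow_succ]
        calc (x⁻¹) ^ j * x⁻¹ ≤ (x⁻¹) ^ j * 1 :=
              mul_le_mul_of_nonneg_left hxi.le (by positivity)
          _ = (x⁻¹) ^ j := mul_one _
      calc ∑ j ∈ Finset.range N, (x⁻¹) ^ (N - (N - 1 - j))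
          ≤ ∑ j ∈ Finset.range N, (x⁻¹) ^ j := Finset.sum_le_sum hle
        _ ≤ ∑' j : ℕ, (x⁻¹) ^ j := Summable.sum_le_tsum _ (fun j _ => by positivity)
              (summable_geometric_of_lt_one hxi0 hxi)
        _ = C := tsum_geometric_of_lt_one hxi0 hxi
    have hE : (0:ℝ) < Real.exp (-(N * x)) := Real.exp_pos _
    calc Real.exp (-(N * x)) * ∑ n ∈ Finset.range N, ((N:ℝ) * x) ^ n / (Nat.factorial n : ℝ)
        ≤ Real.exp (-(N * x)) * ∑ n ∈ Finset.range N,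
            (((N:ℝ) * x) ^ N / (Nat.factorial N : ℝ)) * (x⁻¹) ^ (N - n) :=
          mul_le_mul_of_nonneg_left (Finset.sum_le_sum hterm) hE.le
      _ = (Real.exp (-(N * x)) * (((N:ℝ) * x) ^ N / (Nat.factorial N : ℝ))) *
            ∑ n ∈ Finset.range N, (x⁻¹) ^ (N - n) := by
          rw [← Finset.mul_sum]; ring
      _ ≤ (Real.exp (-(N * x)) * (((N:ℝ) * x) ^ N / (Nat.factorial N : ℝ))) * C := by
          apply mul_le_mul_of_nonneg_left hgsum (by positivity)
      _ ≤ r ^ N * C := mul_le_mul_of_nonneg_right (key_exp_bound N x hx0.le) hC0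
      _ = C * r ^ N := mul_comm _ _

private lemma ginibre_nonneg (N : ℕ) (z : ℂ) : 0 ≤ ginibreOnePoint N z := by
  unfold ginibreOnePoint
  have h : (0:ℝ) ≤ ∑ n ∈ Finset.range N,
      ((N:ℝ) * ‖z‖ ^ 2) ^ n / (Nat.factorial n : ℝ) :=
    Finset.sum_nonneg fun n _ => by positivity
  positivity

private lemma ginibre_le (N : ℕ) (z : ℂ) : ginibreOnePoint N z ≤ Real.pi⁻¹ := by
  unfold ginibreOnePoint
  have hy : (0:ℝ) ≤ (N:ℝ) * ‖z‖ ^ 2 := by positivity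
  have h := Real.sum_le_exp_of_nonneg hy N
  have hE : (0:ℝ) < Real.exp (-((N:ℝ) * ‖z‖ ^ 2)) := Real.exp_pos _
  have hpi : (0:ℝ) < Real.pi⁻¹ := by
    rw [inv_pos]; exact Real.pi_pos
  rw [mul_assoc]
  calc Real.pi⁻¹ * (Real.exp (-((N:ℝ) * ‖z‖ ^ 2)) *
        ∑ n ∈ Finset.range N, ((N:ℝ) * ‖z‖ ^ 2) ^ n / (Nat.factorial n : ℝ))
      ≤ Real.pi⁻¹ * (Real.exp (-((N:ℝ) * ‖z‖ ^ 2)) *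
          Real.exp ((N:ℝ) * ‖z‖ ^ 2)) := by
        apply mul_le_mul_of_nonneg_left _ hpi.le
        exact mul_le_mul_of_nonneg_left h hE.le
    _ = Real.pi⁻¹ := by rw [← Real.exp_add]; simp

private lemma ginibre_continuous (N : ℕ) : Continuous (ginibreOnePoint N) := by
  unfold ginibreOnePoint
  have habs : Continuous fun z : ℂ => (N:ℝ) * ‖z‖ ^ 2 :=
    continuous_const.mul (continuous_norm.pow 2)
  exact ((continuous_const.mul ((habs.neg).rexp)).mul
    (continuous_finset_sum _ fun n _ => (habs.pow n).div_const _))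

/-- Weak convergence of the Ginibre one-point densities to the circular law:
for every continuous compactly supported `f : ℂ → ℝ`,
`∫ f(z) R_N(z) d²z → π⁻¹ ∫_{|z| ≤ 1} f(z) d²z`. -/
theorem ginibre_onePoint_weak_circular_law (f : ℂ → ℝ)
    (hf : Continuous f) (hsupp : HasCompactSupport f) :
    Tendsto (fun N : ℕ => ∫ z : ℂ, f z * ginibreOnePoint N z)
      atTop (nhds (Real.pi⁻¹ * ∫ z in {z : ℂ | ‖z‖ ≤ 1}, f z)) := by
  have hmeas_set : MeasurableSet {z : ℂ | ‖z‖ ≤ 1} :=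
    (isClosed_le continuous_norm continuous_const).measurableSet
  set g : ℂ → ℝ := Set.indicator {z : ℂ | ‖z‖ ≤ 1} (fun z => f z * Real.pi⁻¹) with hg
  have hpi : (0:ℝ) < Real.pi⁻¹ := by rw [inv_pos]; exact Real.pi_pos
  have hnull : (volume : Measure ℂ) {z : ℂ | ‖z‖ = 1} = 0 := by
    have hset : {z : ℂ | ‖z‖ = 1} = Metric.sphere (0:ℂ) 1 := by
      ext z
      simp [Metric.mem_sphere, Complex.dist_eq]
    rw [hset]
    exact Measure.addHaar_sphere (volume : Measure ℂ) (0:ℂ) 1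
  have key : Tendsto (fun N : ℕ => ∫ z : ℂ, f z * ginibreOnePoint N z)
      atTop (nhds (∫ z : ℂ, g z)) := by
    apply MeasureTheory.tendsto_integral_of_dominated_convergence
      (bound := fun z => |f z| * Real.pi⁻¹)
    · intro N
      exact ((hf.mul (ginibre_continuous N)).aestronglyMeasurable)
    · exact (hf.abs.integrable_of_hasCompactSupport hsupp.abs).mul_const _
    · intro N
      filter_upwards with z
      rw [Real.norm_eq_abs, abs_mul, abs_of_nonneg (ginibre_nonneg N z)]
      exact mul_le_mul_of_nonneg_left (ginibre_le N z) (abs_nonneg _)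
    · have hcompl : ∀ᵐ z : ℂ, ‖z‖ ≠ 1 := by
        rw [MeasureTheory.ae_iff]
        simpa using hnull
      filter_upwards [hcompl] with z hz
      set x : ℝ := ‖z‖ ^ 2 with hxdef
      have hx0 : 0 ≤ x := by positivity
      rcases lt_or_gt_of_ne hz with h1 | h1
      · have hx1 : x < 1 := by
          rw [hxdef]
          exact pow_lt_one₀ (norm_nonneg z) h1 two_ne_zero
        have hS := (tendsto_S_lt hx0 hx1).const_mul (f z * Real.pi⁻¹)
        rw [mul_one] at hS
        have hgz : g z = f z * Real.pi⁻¹ := by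
          rw [hg, Set.indicator_of_mem]
          exact h1.le
        rw [hgz]
        convert hS using 2 with N
        unfold ginibreOnePoint
        ring
      · have hx1 : 1 < x := by
          rw [hxdef]
          exact one_lt_pow₀ h1 two_ne_zero
        have hS := (tendsto_S_gt hx1).const_mul (f z * Real.pi⁻¹)
        rw [mul_zero] at hS
        have hgz : g z = 0 := by
          rw [hg, Set.indicator_of_notMem]
          simp only [Set.mem_setOf_eq, not_le]
          exact h1
        rw [hgz]
        convert hS using 2 with N
        unfold ginibreOnePoint
        ring
  have hgint : (∫ z : ℂ, g z) = Real.pi⁻¹ * ∫ z in {z : ℂ | ‖z‖ ≤ 1}, f z := by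
    rw [hg, MeasureTheory.integral_indicator hmeas_set, MeasureTheory.integral_mul_const,
      mul_comm]
  rw [← hgint]
  exact key
end

section
/- For every real r with 0 ≤ r ≤ 1, lim_{N→∞} N^{−1} ln R_N(r) = 0, and for every real r > 1, lim_{N→∞} N^{−1} ln R_N(r) = 1 + ln(r²) − r², which is strictly negative (so R_N(r) is exponentially small in N for r > 1). -/
open Filter

section Aux

open Finset Real

/-- `1/(n+1) ≤ log ((n+1)/n)` for `n ≥ 1`. -/
private lemma inv_succ_le_log (n : ℕ) (hn : 1 ≤ n) :
    (1 : ℝ) / (n + 1) ≤ Real.log ((n + 1) / n) := by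
  have hn' : (0 : ℝ) < n := by exact_mod_cast hn
  have h1 : (0 : ℝ) < (n : ℝ) / (n + 1) := by positivity
  have h := Real.log_le_sub_one_of_pos h1
  have hlog : Real.log ((n : ℝ) / (n + 1)) = -Real.log (((n : ℝ) + 1) / n) := by
    rw [← Real.log_inv]
    congr 1
    field_simp
  rw [hlog] at h
  have h2 : (n : ℝ) / (n + 1) - 1 = -(1 / (n + 1)) := by field_simp; ring
  linarith [h2 ▸ h]

/-- Elementary Stirling lower bound : `n log n - n ≤ log n!`. -/
private lemma logfact_lower (n : ℕ) :
    (n : ℝ) * Real.log n - n ≤ Real.log (Nat.factorial n) := by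
  rcases Nat.eq_zero_or_pos n with h | h
  · simp [h]
  have hn' : (0 : ℝ) < n := by exact_mod_cast h
  have hfac : (0 : ℝ) < (Nat.factorial n : ℝ) := by
    exact_mod_cast Nat.factorial_pos n
  have hterm : (n : ℝ) ^ n / (Nat.factorial n : ℝ) ≤ Real.exp n := by
    calc (n : ℝ) ^ n / (Nat.factorial n : ℝ)
        ≤ ∑ i ∈ range (n + 1), (n : ℝ) ^ i / (Nat.factorial i : ℝ) := by
          refine Finset.single_le_sum (f := fun i => (n : ℝ) ^ i / (Nat.factorial i : ℝ))
            (fun i _ => by positivity) (Finset.mem_range.2 (Nat.lt_succ_self n))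
      _ ≤ Real.exp n := Real.sum_le_exp_of_nonneg hn'.le _
  have hpos : (0 : ℝ) < (n : ℝ) ^ n / (Nat.factorial n : ℝ) := by positivity
  have := Real.log_le_iff_le_exp hpos |>.2 hterm
  rw [Real.log_div (by positivity) hfac.ne', Real.log_pow] at this
  linarith

/-- Elementary Stirling upper bound : `log n! ≤ 1 + log n + n (log n - 1)` for `n ≥ 1`. -/
private lemma logfact_upper (n : ℕ) (hn : 1 ≤ n) :
    Real.log (Nat.factorial n) ≤ 1 + Real.log n + n * (Real.log n - 1) := by
  induction n, hn using Nat.le_induction with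
  | base => simp
  | succ n hn ih =>
    have hn' : (0 : ℝ) < n := by exact_mod_cast hn
    have hfac : (0 : ℝ) < (Nat.factorial n : ℝ) := by exact_mod_cast Nat.factorial_pos n
    have hstep : Real.log (Nat.factorial (n + 1))
        = Real.log (n + 1) + Real.log (Nat.factorial n) := by
      rw [Nat.factorial_succ]
      push_cast
      rw [Real.log_mul (by positivity) hfac.ne']
    have hkey : (1 : ℝ) / (n + 1) ≤ Real.log ((n + 1 : ℝ) / n) := inv_succ_le_log n hn
    have hdiv : Real.log ((n + 1 : ℝ) / n) = Real.log (n + 1) - Real.log n :=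
      Real.log_div (by positivity) hn'.ne'
    rw [hdiv] at hkey
    have hNpos : (0 : ℝ) < (n : ℝ) + 1 := by positivity
    have hmul : (1 : ℝ) ≤ ((n : ℝ) + 1) * (Real.log (n + 1) - Real.log n) := by
      rw [div_le_iff₀ hNpos] at hkey
      linarith [hkey]
    rw [hstep]
    push_cast
    push_cast at ih
    nlinarith [ih, hmul]

private lemma tendsto_log_div :
    Tendsto (fun N : ℕ => Real.log N / N) atTop (nhds 0) := by
  have h := Real.isLittleO_log_id_atTop.tendsto_div_nhds_zero
  have := h.comp tendsto_natCast_atTop_atTop (f := fun n : ℕ => (n : ℝ))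
  exact this

private lemma tendsto_inv_mul_const (c : ℝ) :
    Tendsto (fun N : ℕ => (N : ℝ)⁻¹ * c) atTop (nhds 0) := by
  simpa using (tendsto_inv_atTop_nhds_zero_nat (𝕜 := ℝ)).mul_const c

/-- `log N! / N - log N + 1 → 0`. -/
private lemma tendsto_logfact :
    Tendsto (fun N : ℕ => Real.log (Nat.factorial N) / N - Real.log N + 1)
      atTop (nhds 0) := by
  have hup : Tendsto (fun N : ℕ => (N : ℝ)⁻¹ * 1 + Real.log N / N) atTop (nhds 0) := by
    simpa using (tendsto_inv_mul_const 1).add tendsto_log_div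
  refine tendsto_of_tendsto_of_tendsto_of_le_of_le' tendsto_const_nhds hup ?_ ?_
  · filter_upwards [eventually_ge_atTop 1] with N hN
    have hN' : (0 : ℝ) < N := by exact_mod_cast hN
    have := logfact_lower N
    have h2 : Real.log N - 1 ≤ Real.log (Nat.factorial N) / N := by
      rw [le_div_iff₀ hN']
      nlinarith
    linarith
  · filter_upwards [eventually_ge_atTop 1] with N hN
    have hN' : (0 : ℝ) < N := by exact_mod_cast hN
    have := logfact_upper N hN
    have h2 : Real.log (Nat.factorial N) / N ≤
        (1 + Real.log N + (N : ℝ) * (Real.log N - 1)) / N :=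
      by gcongr
    have h3 : (1 + Real.log N + (N : ℝ) * (Real.log N - 1)) / N
        = (N : ℝ)⁻¹ * 1 + Real.log N / N + Real.log N - 1 := by
      field_simp
      ring
    linarith [h3 ▸ h2]

private lemma gin_eq (N : ℕ) (r : ℝ) (hr : 0 ≤ r) :
    ginibreOnePoint N (r : ℂ) = Real.pi⁻¹ * Real.exp (-(N * r ^ 2)) *
      ∑ n ∈ Finset.range N, (N * r ^ 2) ^ n / (Nat.factorial n : ℝ) := by
  unfold ginibreOnePoint
  rw [Complex.norm_real, Real.norm_eq_abs, abs_of_nonneg hr]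

private lemma term_le_sum (N k : ℕ) (hk : k < N) {x : ℝ} (hx : 0 ≤ x) :
    x ^ k / (Nat.factorial k : ℝ) ≤ ∑ n ∈ Finset.range N, x ^ n / (Nat.factorial n : ℝ) :=
  Finset.single_le_sum (f := fun n => x ^ n / (Nat.factorial n : ℝ))
    (fun i _ => by positivity) (Finset.mem_range.2 hk)

private lemma sum_pos (N : ℕ) (hN : 1 ≤ N) {x : ℝ} (hx : 0 ≤ x) :
    (1 : ℝ) ≤ ∑ n ∈ Finset.range N, x ^ n / (Nat.factorial n : ℝ) := by
  have := term_le_sum N 0 hN hx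
  simpa using this

private lemma log_gin (N : ℕ) (r : ℝ) (hr : 0 ≤ r) (hN : 1 ≤ N) :
    Real.log (ginibreOnePoint N (r : ℂ)) =
      -Real.log Real.pi - N * r ^ 2 +
        Real.log (∑ n ∈ Finset.range N, (N * r ^ 2) ^ n / (Nat.factorial n : ℝ)) := by
  have hx : (0 : ℝ) ≤ N * r ^ 2 := by positivity
  have hS : (0 : ℝ) < ∑ n ∈ Finset.range N, (N * r ^ 2) ^ n / (Nat.factorial n : ℝ) :=
    lt_of_lt_of_le one_pos (sum_pos N hN hx)
  rw [gin_eq N r hr, Real.log_mul (by positivity) hS.ne', Real.log_mul (by positivity)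
    (Real.exp_ne_zero _), Real.log_inv, Real.log_exp]
  ring

end Aux

section Main

open Finset Real

/-- Core lower bound for `r ≤ 1` : `log S ≥ x - 2 - log x`. -/
private lemma logS_lower (N : ℕ) (hN : 2 ≤ N) {x : ℝ} (hx1 : 1 ≤ x) (hxN : x ≤ N) :
    x - 2 - Real.log x ≤
      Real.log (∑ n ∈ Finset.range N, x ^ n / (Nat.factorial n : ℝ)) := by
  have hx0 : (0 : ℝ) < x := lt_of_lt_of_le one_pos hx1
  set k : ℕ := min (Nat.floor x) (N - 1) with hk
  have hk1 : 1 ≤ k := by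
    refine le_min ?_ ?_
    · exact Nat.le_floor (by exact_mod_cast hx1)
    · omega
  have hkN : k < N := by
    have : k ≤ N - 1 := min_le_right _ _
    omega
  have hkx : (k : ℝ) ≤ x := by
    have : (k : ℝ) ≤ (Nat.floor x : ℝ) := by exact_mod_cast min_le_left _ _
    exact this.trans (Nat.floor_le hx0.le)
  have hxk : x - 1 ≤ (k : ℝ) := by
    rcases le_or_gt (Nat.floor x) (N - 1) with h | h
    · have : k = Nat.floor x := min_eq_left h
      rw [this]
      have := Nat.lt_floor_add_one x
      linarith
    · have hkeq : k = N - 1 := min_eq_right h.le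
      have : ((N - 1 : ℕ) : ℝ) = (N : ℝ) - 1 := by
        have : 1 ≤ N := by omega
        push_cast [Nat.cast_sub this]
        ring
      rw [hkeq, this]
      linarith
  have hk0' : (0 : ℝ) < k := by exact_mod_cast hk1
  have hterm := term_le_sum N k hkN hx0.le
  have hS : (0 : ℝ) < ∑ n ∈ Finset.range N, x ^ n / (Nat.factorial n : ℝ) :=
    lt_of_lt_of_le one_pos (sum_pos N (by omega) hx0.le)
  have hlogterm : Real.log (x ^ k / (Nat.factorial k : ℝ)) =
      (k : ℝ) * Real.log x - Real.log (Nat.factorial k) := by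
    rw [Real.log_div (by positivity) (by exact_mod_cast (Nat.factorial_pos k).ne'),
      Real.log_pow]
  have hfac := logfact_upper k hk1
  have hlogk : Real.log k ≤ Real.log x := Real.log_le_log hk0' hkx
  have hlogk0 : (0 : ℝ) ≤ Real.log k := Real.log_nonneg (by exact_mod_cast hk1)
  have hmono : Real.log (x ^ k / (Nat.factorial k : ℝ)) ≤
      Real.log (∑ n ∈ Finset.range N, x ^ n / (Nat.factorial n : ℝ)) :=
    Real.log_le_log (by positivity) hterm
  rw [hlogterm] at hmono
  have hnn : 0 ≤ (k : ℝ) * (Real.log x - Real.log k) :=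
    mul_nonneg hk0'.le (by linarith)
  nlinarith [hmono, hfac, hnn]

/-- `(N+d)! ≤ N! * (N+d)^d`. -/
private lemma fact_le_mul_pow (n d : ℕ) :
    Nat.factorial (n + d) ≤ Nat.factorial n * (n + d) ^ d := by
  induction d with
  | zero => simp
  | succ d ih =>
    have h1 : Nat.factorial (n + d + 1) = (n + d + 1) * Nat.factorial (n + d) :=
      Nat.factorial_succ _
    calc Nat.factorial (n + (d + 1)) = (n + d + 1) * Nat.factorial (n + d) := by
          rw [← h1]; ring_nf
      _ ≤ (n + d + 1) * (Nat.factorial n * (n + d) ^ d) := by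
          exact Nat.mul_le_mul_left _ ih
      _ ≤ (n + d + 1) * (Nat.factorial n * (n + d + 1) ^ d) := by
          refine Nat.mul_le_mul_left _ (Nat.mul_le_mul_left _ ?_)
          exact Nat.pow_le_pow_left (by omega) d
      _ = Nat.factorial n * (n + (d + 1)) ^ (d + 1) := by ring_nf

/-- For `x ≥ N`, every term of the partial sum is at most the last one. -/
private lemma term_le_last (N n : ℕ) (hn : n < N) {x : ℝ} (hxN : (N : ℝ) ≤ x) :
    x ^ n / (Nat.factorial n : ℝ) ≤ x ^ (N - 1) / (Nat.factorial (N - 1) : ℝ) := by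
  have hN1 : 1 ≤ N := by omega
  have hx0 : (0 : ℝ) < x := lt_of_lt_of_le (by exact_mod_cast hN1) hxN
  set m : ℕ := N - 1 with hm
  have hnm : n ≤ m := by omega
  obtain ⟨d, hd⟩ : ∃ d, m = n + d := ⟨m - n, by omega⟩
  have hfac : (Nat.factorial m : ℝ) ≤ (Nat.factorial n : ℝ) * x ^ d := by
    have h1 : Nat.factorial m ≤ Nat.factorial n * (n + d) ^ d := hd ▸ fact_le_mul_pow n d
    have h2 : ((n + d : ℕ) : ℝ) ≤ x := by
      have : n + d = m := hd.symm
      have : ((n + d : ℕ) : ℝ) ≤ (N : ℝ) := by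
        have : n + d ≤ N := by omega
        exact_mod_cast this
      linarith
    calc (Nat.factorial m : ℝ) ≤ (Nat.factorial n : ℝ) * ((n + d : ℕ) : ℝ) ^ d := by
          exact_mod_cast h1
      _ ≤ (Nat.factorial n : ℝ) * x ^ d := by
          refine mul_le_mul_of_nonneg_left ?_ (by positivity)
          exact pow_le_pow_left₀ (by positivity) h2 d
  have hfn : (0 : ℝ) < (Nat.factorial n : ℝ) := by exact_mod_cast Nat.factorial_pos n
  have hfm : (0 : ℝ) < (Nat.factorial m : ℝ) := by exact_mod_cast Nat.factorial_pos m
  rw [div_le_div_iff₀ hfn hfm]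
  calc x ^ n * (Nat.factorial m : ℝ) ≤ x ^ n * ((Nat.factorial n : ℝ) * x ^ d) :=
        mul_le_mul_of_nonneg_left hfac (by positivity)
    _ = x ^ m * (Nat.factorial n : ℝ) := by rw [hd, pow_add]; ring

private lemma sum_le_N_mul_last (N : ℕ) {x : ℝ} (hxN : (N : ℝ) ≤ x) (hN : 1 ≤ N) :
    (∑ n ∈ Finset.range N, x ^ n / (Nat.factorial n : ℝ)) ≤
      N * (x ^ (N - 1) / (Nat.factorial (N - 1) : ℝ)) := by
  have := Finset.sum_le_card_nsmul (Finset.range N)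
    (fun n => x ^ n / (Nat.factorial n : ℝ)) (x ^ (N - 1) / (Nat.factorial (N - 1) : ℝ))
    (fun n hn => term_le_last N n (Finset.mem_range.1 hn) hxN)
  simpa [Finset.card_range, nsmul_eq_mul] using this

end Main

section Limits

open Finset Real

/-- Part A : the limit for `0 ≤ r ≤ 1`. -/
private lemma partA (r : ℝ) (hr0 : 0 ≤ r) (hr1 : r ≤ 1) :
    Tendsto (fun N : ℕ => (N : ℝ)⁻¹ * Real.log (ginibreOnePoint N (r : ℂ)))
      atTop (nhds 0) := by
  rcases eq_or_lt_of_le hr0 with h0 | h0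
  · -- r = 0
    have hcongr : (fun N : ℕ => (N : ℝ)⁻¹ * Real.log (ginibreOnePoint N (r : ℂ)))
        =ᶠ[atTop] fun N : ℕ => (N : ℝ)⁻¹ * (-Real.log Real.pi) := by
      filter_upwards [eventually_ge_atTop 1] with N hN
      rw [log_gin N r hr0 hN]
      have : (∑ n ∈ Finset.range N, ((N : ℝ) * r ^ 2) ^ n / (Nat.factorial n : ℝ)) = 1 := by
        rw [← h0]
        rw [Finset.sum_eq_single 0]
        · simp
        · intro n _ hn
          simp [zero_pow hn]
        · intro h
          exact absurd (Finset.mem_range.2 (by omega)) h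
      rw [this, Real.log_one, ← h0]
      ring_nf
    exact (tendsto_inv_mul_const (-Real.log Real.pi)).congr' hcongr.symm
  · -- 0 < r ≤ 1
    have hr2 : (0 : ℝ) < r ^ 2 := by positivity
    have hlow : Tendsto (fun N : ℕ =>
        (N : ℝ)⁻¹ * (-Real.log Real.pi - 2) - (N : ℝ)⁻¹ * Real.log (N * r ^ 2))
        atTop (nhds 0) := by
      have h1 := tendsto_inv_mul_const (-Real.log Real.pi - 2)
      have h2 : Tendsto (fun N : ℕ => (N : ℝ)⁻¹ * Real.log (N * r ^ 2)) atTop (nhds 0) := by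
        have h3 : Tendsto (fun N : ℕ => Real.log N / N + (N : ℝ)⁻¹ * Real.log (r ^ 2))
            atTop (nhds 0) := by
          have h4 := tendsto_log_div.add (tendsto_inv_mul_const (Real.log (r ^ 2)))
          rwa [add_zero] at h4
        refine h3.congr' ?_
        filter_upwards [eventually_ge_atTop 1] with N hN
        have hN' : (0 : ℝ) < N := by exact_mod_cast hN
        rw [Real.log_mul hN'.ne' hr2.ne']
        field_simp
      simpa using h1.sub h2
    have hup : Tendsto (fun N : ℕ => (N : ℝ)⁻¹ * (-Real.log Real.pi)) atTop (nhds 0) :=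
      tendsto_inv_mul_const _
    refine tendsto_of_tendsto_of_tendsto_of_le_of_le' hlow hup ?_ ?_
    · filter_upwards [eventually_ge_atTop 2, eventually_ge_atTop ⌈(r ^ 2)⁻¹⌉₊]
        with N hN2 hNr
      have hN' : (0 : ℝ) < N := by positivity
      have hx1 : (1 : ℝ) ≤ N * r ^ 2 := by
        have h1 : (r ^ 2)⁻¹ ≤ (N : ℝ) := le_trans (Nat.le_ceil _) (by exact_mod_cast hNr)
        rw [← inv_mul_cancel₀ hr2.ne']
        exact mul_le_mul_of_nonneg_right h1 hr2.le
      have hr21 : r ^ 2 ≤ 1 := by nlinarith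
      have hxN : (N : ℝ) * r ^ 2 ≤ N := by nlinarith [hN'.le]
      have hL := logS_lower N hN2 hx1 hxN
      rw [log_gin N r hr0 (by omega)]
      have : -Real.log Real.pi - 2 - Real.log (N * r ^ 2) ≤
          -Real.log Real.pi - N * r ^ 2 +
            Real.log (∑ n ∈ Finset.range N, ((N : ℝ) * r ^ 2) ^ n / (Nat.factorial n : ℝ)) := by
        linarith
      calc (N : ℝ)⁻¹ * (-Real.log Real.pi - 2) - (N : ℝ)⁻¹ * Real.log (N * r ^ 2)
          = (N : ℝ)⁻¹ * (-Real.log Real.pi - 2 - Real.log (N * r ^ 2)) := by ring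
        _ ≤ _ := mul_le_mul_of_nonneg_left this (by positivity)
    · filter_upwards [eventually_ge_atTop 1] with N hN
      have hx0 : (0 : ℝ) ≤ N * r ^ 2 := by positivity
      have hS : (0 : ℝ) < ∑ n ∈ Finset.range N, ((N : ℝ) * r ^ 2) ^ n / (Nat.factorial n : ℝ) :=
        lt_of_lt_of_le one_pos (sum_pos N hN hx0)
      have hSle : Real.log (∑ n ∈ Finset.range N, ((N : ℝ) * r ^ 2) ^ n / (Nat.factorial n : ℝ))
          ≤ N * r ^ 2 := by
        rw [Real.log_le_iff_le_exp hS]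
        exact Real.sum_le_exp_of_nonneg hx0 N
      rw [log_gin N r hr0 hN]
      refine mul_le_mul_of_nonneg_left (by linarith) (by positivity)

/-- Part B : the limit for `r > 1`. -/
private lemma partB (r : ℝ) (hr : 1 < r) :
    Tendsto (fun N : ℕ => (N : ℝ)⁻¹ * Real.log (ginibreOnePoint N (r : ℂ)))
      atTop (nhds (1 + Real.log (r ^ 2) - r ^ 2)) := by
  have hr0 : (0 : ℝ) ≤ r := by linarith
  have hr2 : (1 : ℝ) < r ^ 2 := by nlinarith
  have hr2' : (0 : ℝ) < r ^ 2 := by positivity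
  -- B N := N⁻¹ * log (last term), tends to 1 + log r²
  set v := Real.log (r ^ 2) with hv
  have hB : Tendsto (fun N : ℕ =>
      (N : ℝ)⁻¹ * (((N - 1 : ℕ) : ℝ) * Real.log (N * r ^ 2)
        - Real.log (Nat.factorial (N - 1)))) atTop (nhds (1 + v)) := by
    have hexpr : Tendsto (fun N : ℕ =>
        (1 + v) - (Real.log (Nat.factorial N) / N - Real.log N + 1) - v * (N : ℝ)⁻¹)
        atTop (nhds (1 + v)) := by
      have := (tendsto_const_nhds (x := 1 + v) (f := atTop (α := ℕ))).sub tendsto_logfact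
      have h2 := this.sub ((tendsto_inv_atTop_nhds_zero_nat (𝕜 := ℝ)).const_mul v)
      simpa using h2
    refine hexpr.congr' ?_
    filter_upwards [eventually_ge_atTop 1] with N hN
    have hN' : (0 : ℝ) < N := by exact_mod_cast hN
    have hcast : ((N - 1 : ℕ) : ℝ) = (N : ℝ) - 1 := by
      push_cast [Nat.cast_sub hN]
      ring
    have hfacsplit : Real.log (Nat.factorial N) =
        Real.log N + Real.log (Nat.factorial (N - 1)) := by
      have h1 : Nat.factorial N = N * Nat.factorial (N - 1) := by
        obtain ⟨M, rfl⟩ : ∃ M, N = M + 1 := ⟨N - 1, by omega⟩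
        simp [Nat.factorial_succ]
      rw [h1]
      push_cast
      rw [Real.log_mul hN'.ne' (by exact_mod_cast (Nat.factorial_pos (N - 1)).ne')]
    have hlogx : Real.log ((N : ℝ) * r ^ 2) = Real.log N + v :=
      Real.log_mul hN'.ne' hr2'.ne'
    rw [hcast, hlogx]
    have hF : Real.log (Nat.factorial (N - 1)) = Real.log (Nat.factorial N) - Real.log N := by
      linarith [hfacsplit]
    rw [hF]
    field_simp
    ring
  -- sandwich N⁻¹ log S between B and B + log N / N
  have hSlim : Tendsto (fun N : ℕ =>
      (N : ℝ)⁻¹ * Real.log (∑ n ∈ Finset.range N,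
        ((N : ℝ) * r ^ 2) ^ n / (Nat.factorial n : ℝ))) atTop (nhds (1 + v)) := by
    have hBup : Tendsto (fun N : ℕ =>
        (N : ℝ)⁻¹ * (((N - 1 : ℕ) : ℝ) * Real.log (N * r ^ 2)
          - Real.log (Nat.factorial (N - 1))) + Real.log N / N) atTop (nhds (1 + v)) := by
      simpa using hB.add tendsto_log_div
    refine tendsto_of_tendsto_of_tendsto_of_le_of_le' hB hBup ?_ ?_
    all_goals
      filter_upwards [eventually_ge_atTop 1] with N hN
    all_goals
      have hN' : (0 : ℝ) < N := by exact_mod_cast hN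
      have hxN : (N : ℝ) ≤ (N : ℝ) * r ^ 2 := by nlinarith
      have hx0 : (0 : ℝ) < (N : ℝ) * r ^ 2 := by nlinarith
      have hfm : (0 : ℝ) < (Nat.factorial (N - 1) : ℝ) := by
        exact_mod_cast Nat.factorial_pos (N - 1)
      have hlast : Real.log (((N : ℝ) * r ^ 2) ^ (N - 1) / (Nat.factorial (N - 1) : ℝ))
          = ((N - 1 : ℕ) : ℝ) * Real.log (N * r ^ 2) - Real.log (Nat.factorial (N - 1)) := by
        rw [Real.log_div (by positivity) hfm.ne', Real.log_pow]
      have hS : (0 : ℝ) < ∑ n ∈ Finset.range N, ((N : ℝ) * r ^ 2) ^ n / (Nat.factorial n : ℝ) :=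
        lt_of_lt_of_le one_pos (sum_pos N hN hx0.le)
    · -- lower bound
      have hterm := term_le_sum N (N - 1) (by omega) hx0.le
      have := Real.log_le_log (by positivity) hterm
      rw [hlast] at this
      exact mul_le_mul_of_nonneg_left this (by positivity)
    · -- upper bound
      have hup := sum_le_N_mul_last N hxN hN
      have hlogup : Real.log (∑ n ∈ Finset.range N,
          ((N : ℝ) * r ^ 2) ^ n / (Nat.factorial n : ℝ)) ≤
          Real.log N + (((N - 1 : ℕ) : ℝ) * Real.log (N * r ^ 2)
            - Real.log (Nat.factorial (N - 1))) := by
        have h1 := Real.log_le_log hS hup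
        rw [Real.log_mul hN'.ne' (by positivity), hlast] at h1
        exact h1
      calc (N : ℝ)⁻¹ * Real.log (∑ n ∈ Finset.range N,
            ((N : ℝ) * r ^ 2) ^ n / (Nat.factorial n : ℝ))
          ≤ (N : ℝ)⁻¹ * (Real.log N + (((N - 1 : ℕ) : ℝ) * Real.log (N * r ^ 2)
            - Real.log (Nat.factorial (N - 1)))) :=
            mul_le_mul_of_nonneg_left hlogup (by positivity)
        _ = (N : ℝ)⁻¹ * (((N - 1 : ℕ) : ℝ) * Real.log (N * r ^ 2)
            - Real.log (Nat.factorial (N - 1))) + Real.log N / N := by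
            field_simp
            ring
  -- assemble
  have hfinal : Tendsto (fun N : ℕ => (N : ℝ)⁻¹ * (-Real.log Real.pi) - r ^ 2 +
      (N : ℝ)⁻¹ * Real.log (∑ n ∈ Finset.range N,
        ((N : ℝ) * r ^ 2) ^ n / (Nat.factorial n : ℝ))) atTop
      (nhds (1 + Real.log (r ^ 2) - r ^ 2)) := by
    have := ((tendsto_inv_mul_const (-Real.log Real.pi)).sub_const (r ^ 2)).add hSlim
    have heq : (0 : ℝ) - r ^ 2 + (1 + v) = 1 + Real.log (r ^ 2) - r ^ 2 := by
      rw [hv]; ring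
    rwa [heq] at this
  refine hfinal.congr' ?_
  filter_upwards [eventually_ge_atTop 1] with N hN
  have hN' : (0 : ℝ) < N := by exact_mod_cast hN
  rw [log_gin N r hr0 hN]
  field_simp

end Limits

/-- Exponential decay rate of the Ginibre one-point density: `N⁻¹ ln R_N(r) → 0`
for `0 ≤ r ≤ 1`, while `N⁻¹ ln R_N(r) → 1 + ln(r²) - r² < 0` for `r > 1`. -/
theorem ginibre_onePoint_log_asymptotics :
    (∀ r : ℝ, 0 ≤ r → r ≤ 1 →
      Tendsto (fun N : ℕ => (N : ℝ)⁻¹ * Real.log (ginibreOnePoint N (r : ℂ)))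
        atTop (nhds 0)) ∧
    (∀ r : ℝ, 1 < r →
      Tendsto (fun N : ℕ => (N : ℝ)⁻¹ * Real.log (ginibreOnePoint N (r : ℂ)))
        atTop (nhds (1 + Real.log (r ^ 2) - r ^ 2)) ∧
      1 + Real.log (r ^ 2) - r ^ 2 < 0) := by
  constructor
  · exact partA
  · intro r hr
    refine ⟨partB r hr, ?_⟩
    have h1 : (1 : ℝ) < r ^ 2 := by nlinarith
    have := Real.log_lt_sub_one_of_pos (by positivity : (0:ℝ) < r ^ 2) (by linarith)
    linarith
end

section
/- For every fixed real r with 0 < r < 1, lim_{N→∞} ( Π_{n=0}^{N−2} λ_n^+ ) / ( e · r (1 − r²) · N^N e^{−N(1 − r²)} ) = 1; that is, the product of the leading eigenvalues satisfies Π_{n=0}^{N−2} λ_n^+ ∼ e · r(1 − r²) · exp( N ln N − N(1 − r²) ) as N → ∞. -/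
open Filter

/-- The leading eigenvalue `λ_n^+` of the 2×2 transfer matrix
`A_n = [[0, 1], [-N n r², N r² + n + 1]]` of the Chalker–Mehlig recursion. -/
noncomputable def lamPlus (r : ℝ) (N n : ℕ) : ℝ :=
  ((N : ℝ) / 2) * (r ^ 2 + ((n : ℝ) + 1) / N +
    Real.sqrt ((((n : ℝ) + 1) / N - r ^ 2) ^ 2 + 4 * r ^ 2 / N))

noncomputable def sD (c x : ℝ) : ℝ := Real.sqrt ((x - c)^2 + 4*c)
noncomputable def lm (c x : ℝ) : ℝ := (c + x + sD c x) / 2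
noncomputable def lamd (c x : ℝ) : ℝ := (1 + (x - c) / sD c x) / 2
noncomputable def fl (c x : ℝ) : ℝ := Real.log (lm c x)
noncomputable def fl' (c x : ℝ) : ℝ := lamd c x / lm c x
noncomputable def fl'' (c x : ℝ) : ℝ :=
  (2*c/(sD c x)^3 * lm c x - lamd c x * lamd c x) / (lm c x)^2
noncomputable def Mb (c : ℝ) : ℝ := 1/(4*c*Real.sqrt c) + 1/c^2
noncomputable def Fa (c x : ℝ) : ℝ :=
  (x - 1) * Real.log (lm c x) - lm c x + Real.log (lm c x - c)

section d
variable {c x : ℝ} (hc : 0 < c)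
include hc

lemma sD_pos : 0 < sD c x := Real.sqrt_pos.2 (by positivity)
lemma sq_sD : sD c x ^ 2 = (x - c)^2 + 4*c := Real.sq_sqrt (by positivity)
lemma abs_lt_sD : |x - c| < sD c x := by
  rw [show sD c x = Real.sqrt ((x-c)^2 + 4*c) from rfl,
    Real.lt_sqrt (abs_nonneg _), sq_abs]; linarith
lemma lm_sub_c_pos : 0 < lm c x - c := by
  have h := abs_lt_sD (x := x) hc
  have h2 := neg_abs_le (x - c)
  unfold lm; linarith
lemma lm_sub_x_pos : 0 < lm c x - x := by
  have h := abs_lt_sD (x := x) hc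
  have h2 := le_abs_self (x - c)
  unfold lm; linarith
lemma lm_pos : 0 < lm c x := by have := lm_sub_c_pos (x := x) hc; linarith
lemma c_le_lm : c ≤ lm c x := by have := lm_sub_c_pos (x := x) hc; linarith
lemma lamd_pos : 0 < lamd c x := by
  have h := abs_lt_sD (x := x) hc
  have h2 := neg_abs_le (x - c)
  have hs := sD_pos (c := c) (x := x) hc
  have : -1 < (x - c) / sD c x := by rw [lt_div_iff₀ hs]; linarith
  unfold lamd; linarith
lemma lamd_le_one : lamd c x ≤ 1 := by
  have h := abs_lt_sD (x := x) hc
  have h2 := le_abs_self (x - c)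
  have hs := sD_pos (c := c) (x := x) hc
  have : (x - c) / sD c x ≤ 1 := by rw [div_le_one hs]; linarith
  unfold lamd; linarith
lemma quad : (lm c x - c) * (lm c x - (x - 1)) = lm c x := by
  have h := sq_sD (c := c) (x := x) hc
  unfold lm; ring_nf; nlinarith [h]
lemma lm_xc : (lm c x - c) * (lm c x - x) = c := by
  linear_combination quad (x := x) hc

lemma hasDerivAt_sD : HasDerivAt (sD c) ((x - c) / sD c x) x := by
  have h1 : HasDerivAt (fun y : ℝ => (y - c)^2 + 4*c) (2*(x-c)) x := by
    have := (((hasDerivAt_id x).sub_const c).pow 2).add_const (4*c)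
    simpa using this
  have h2 := h1.sqrt (by positivity)
  convert h2 using 1
  unfold sD; ring
  unfold sD; ring
lemma hasDerivAt_lm : HasDerivAt (lm c) (lamd c x) x := by
  have h := (((hasDerivAt_const x c).add (hasDerivAt_id x)).add (hasDerivAt_sD hc)).div_const 2
  apply h.congr_deriv; symm
  unfold lamd; ring
lemma hasDerivAt_fl : HasDerivAt (fl c) (fl' c x) x :=
  (hasDerivAt_lm hc).log (lm_pos (x := x) hc).ne'
lemma hasDerivAt_lamd : HasDerivAt (lamd c) (2*c/(sD c x)^3) x := by
  have hs := sD_pos (c := c) (x := x) hc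
  have hq := sq_sD (c := c) (x := x) hc
  have h1 := ((hasDerivAt_id x).sub_const c).div (hasDerivAt_sD hc) hs.ne'
  have h2 := ((hasDerivAt_const x (1:ℝ)).add h1).div_const 2
  apply h2.congr_deriv; symm
  simp only [id]
  field_simp
  linear_combination (-1 : ℝ) * hq
lemma hasDerivAt_fl' : HasDerivAt (fl' c) (fl'' c x) x :=
  (hasDerivAt_lamd hc).div (hasDerivAt_lm hc) (lm_pos (x := x) hc).ne'

lemma sD_ge : 2 * Real.sqrt c ≤ sD c x := by
  have h : Real.sqrt (4*c) ≤ sD c x := Real.sqrt_le_sqrt (by nlinarith [sq_nonneg (x-c)])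
  have : Real.sqrt (4*c) = 2 * Real.sqrt c := by
    rw [show (4:ℝ)*c = 2^2*c by ring, Real.sqrt_mul (by positivity), Real.sqrt_sq (by norm_num)]
  linarith

lemma abs_fl''_le : |fl'' c x| ≤ Mb c := by
  have hs := sD_pos (c := c) (x := x) hc
  have hs2 := sD_ge (c := c) (x := x) hc
  have hl := lm_pos (c := c) (x := x) hc
  have hcl := c_le_lm (c := c) (x := x) hc
  have hd1 := lamd_pos (c := c) (x := x) hc
  have hd2 := lamd_le_one (c := c) (x := x) hc
  have hsc : 0 < Real.sqrt c := Real.sqrt_pos.2 hc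
  have hcube : 8 * (c * Real.sqrt c) ≤ (sD c x)^3 := by
    have h1 : (2*Real.sqrt c)^3 ≤ (sD c x)^3 := pow_le_pow_left₀ (by positivity) hs2 3
    have h2 : (2*Real.sqrt c)^3 = 8 * (Real.sqrt c * Real.sqrt c * Real.sqrt c) := by ring
    rw [h2, Real.mul_self_sqrt hc.le] at h1
    linarith
  have hnum : |2*c/(sD c x)^3 * lm c x - lamd c x * lamd c x|
      ≤ 2*c/(sD c x)^3 * lm c x + lamd c x * lamd c x := by
    calc |2*c/(sD c x)^3 * lm c x - lamd c x * lamd c x|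
        ≤ |2*c/(sD c x)^3 * lm c x| + |lamd c x * lamd c x| := abs_sub _ _
      _ = 2*c/(sD c x)^3 * lm c x + lamd c x * lamd c x := by
          rw [abs_of_pos (by positivity), abs_of_pos (by positivity)]
  have t1 : 2*c/(sD c x)^3 * lm c x / (lm c x)^2 ≤ 1/(4*c*Real.sqrt c) := by
    have e1 : 2*c/(sD c x)^3 * lm c x / (lm c x)^2 = 2*c/((sD c x)^3 * lm c x) := by
      field_simp
    rw [e1, div_le_div_iff₀ (by positivity) (by positivity)]
    nlinarith [mul_le_mul hcube hcl hc.le (by positivity : (0:ℝ) ≤ (sD c x)^3)]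
  have t2 : lamd c x * lamd c x / (lm c x)^2 ≤ 1/c^2 := by
    rw [div_le_div_iff₀ (by positivity) (by positivity)]
    nlinarith [mul_le_mul hd2 hd2 hd1.le (by norm_num : (0:ℝ) ≤ 1),
      mul_le_mul hcl hcl hc.le hl.le]
  calc |fl'' c x| = |2*c/(sD c x)^3 * lm c x - lamd c x * lamd c x| / (lm c x)^2 := by
        unfold fl''; rw [abs_div, abs_of_pos (by positivity : (0:ℝ) < (lm c x)^2)]
    _ ≤ (2*c/(sD c x)^3 * lm c x + lamd c x * lamd c x) / (lm c x)^2 := by gcongr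
    _ = 2*c/(sD c x)^3 * lm c x / (lm c x)^2 + lamd c x * lamd c x / (lm c x)^2 := by ring
    _ ≤ 1/(4*c*Real.sqrt c) + 1/c^2 := add_le_add t1 t2

lemma hasDerivAt_Fa : HasDerivAt (Fa c) (fl c x) x := by
  have hl := lm_pos (c := c) (x := x) hc
  have hlc := lm_sub_c_pos (c := c) (x := x) hc
  have h1 := ((hasDerivAt_id x).sub_const 1).mul (hasDerivAt_fl hc)
  have h2 := hasDerivAt_lm (x := x) hc
  have h3 := ((hasDerivAt_lm (x := x) hc).sub_const c).log hlc.ne'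
  have h := (h1.sub h2).add h3
  apply h.congr_deriv; symm
  have hq := quad (c := c) (x := x) hc
  simp only [id]
  unfold fl fl'
  field_simp
  linear_combination (lamd c x) * hq

omit hc in
lemma continuous_sD : Continuous (sD c) := by
  apply Continuous.sqrt; continuity
omit hc in
lemma continuous_lm : Continuous (lm c) := by
  unfold lm
  have := continuous_sD (c := c)
  continuity
lemma continuous_fl : Continuous (fl c) :=
  (continuous_lm (c := c)).log (fun y => (lm_pos (x := y) hc).ne')

lemma integral_fl (a b : ℝ) : ∫ y in a..b, fl c y = Fa c b - Fa c a :=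
  intervalIntegral.integral_eq_sub_of_hasDerivAt
    (fun t _ => hasDerivAt_Fa (x := t) hc)
    ((continuous_fl hc).intervalIntegrable a b)

lemma Mb_nonneg : 0 ≤ Mb c := by unfold Mb; positivity

lemma cell_err (m : ℝ) :
    |(∫ t in (m - 1/2)..(m + 1/2), fl c t) - fl c m| ≤ Mb c / 4 := by
  set I : Set ℝ := Set.Icc (m - 1/2) (m + 1/2) with hI
  have hmI : m ∈ I := by constructor <;> norm_num [hI]
  have hconv : Convex ℝ I := convex_Icc _ _
  have hlip : ∀ t ∈ I, |fl' c t - fl' c m| ≤ Mb c / 2 := by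
    intro t ht
    have h := Convex.norm_image_sub_le_of_norm_hasDerivWithin_le
      (f := fl' c) (f' := fl'' c) (s := I) (C := Mb c)
      (fun y _ => (hasDerivAt_fl' hc).hasDerivWithinAt)
      (fun y _ => by simpa using abs_fl''_le (x := y) hc) hconv hmI ht
    have h2 : |t - m| ≤ 1/2 := by
      rw [abs_le]; obtain ⟨h3, h4⟩ := ht; constructor <;> simp at h3 h4 ⊢ <;> linarith
    simp only [Real.norm_eq_abs] at h
    calc |fl' c t - fl' c m| ≤ Mb c * |t - m| := h
      _ ≤ Mb c * (1/2) := by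
          have := Mb_nonneg (c := c) hc
          nlinarith
      _ = Mb c / 2 := by ring
  have hg : ∀ t ∈ I, |(fl c t - fl' c m * (t - m)) - fl c m| ≤ Mb c / 4 := by
    intro t ht
    have h := Convex.norm_image_sub_le_of_norm_hasDerivWithin_le
      (f := fun y => fl c y - fl' c m * (y - m)) (f' := fun y => fl' c y - fl' c m)
      (s := I) (C := Mb c / 2)
      (fun y _ => by
        have hlin : HasDerivAt (fun z : ℝ => fl' c m * (z - m)) (fl' c m) y := by
          simpa using ((hasDerivAt_id y).sub_const m).const_mul (fl' c m)
        exact ((hasDerivAt_fl hc).sub hlin).hasDerivWithinAt)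
      (fun y hy => by simpa using hlip y hy) hconv hmI ht
    have h2 : |t - m| ≤ 1/2 := by
      rw [abs_le]; obtain ⟨h3, h4⟩ := ht; constructor <;> simp at h3 h4 ⊢ <;> linarith
    simp only [Real.norm_eq_abs] at h
    have hMb := Mb_nonneg (c := c) hc
    calc |(fl c t - fl' c m * (t - m)) - fl c m|
        = |(fl c t - fl' c m * (t - m)) - (fl c m - fl' c m * (m - m))| := by ring_nf
      _ ≤ Mb c / 2 * |t - m| := h
      _ ≤ Mb c / 4 := by nlinarith
  have hint : (∫ t in (m - 1/2)..(m + 1/2), fl c t) - fl c m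
      = ∫ t in (m - 1/2)..(m + 1/2), ((fl c t - fl' c m * (t - m)) - fl c m) := by
    have hi1 : IntervalIntegrable (fl c) MeasureTheory.volume (m - 1/2) (m + 1/2) :=
      (continuous_fl hc).intervalIntegrable _ _
    have hi2 : IntervalIntegrable (fun t : ℝ => fl' c m * (t - m) + fl c m)
        MeasureTheory.volume (m - 1/2) (m + 1/2) := by
      apply Continuous.intervalIntegrable; continuity
    have e1 : ∀ t : ℝ, (fl c t - fl' c m * (t - m)) - fl c m
        = fl c t - (fl' c m * (t - m) + fl c m) := by intro t; ring
    rw [show (fun t : ℝ => (fl c t - fl' c m * (t - m)) - fl c m)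
        = fun t : ℝ => fl c t - (fl' c m * (t - m) + fl c m) from funext e1]
    rw [intervalIntegral.integral_sub hi1 hi2]
    have e2 : (∫ t in (m - 1/2)..(m + 1/2), (fl' c m * (t - m) + fl c m)) = fl c m := by
      have i3 : IntervalIntegrable (fun t : ℝ => fl' c m * (t - m))
          MeasureTheory.volume (m - 1/2) (m + 1/2) := by
        apply Continuous.intervalIntegrable; continuity
      have i4 : IntervalIntegrable (fun _ : ℝ => fl c m)
          MeasureTheory.volume (m - 1/2) (m + 1/2) := intervalIntegrable_const
      rw [intervalIntegral.integral_add i3 i4]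
      have e3 : (∫ t in (m - 1/2)..(m + 1/2), fl' c m * (t - m)) = 0 := by
        rw [intervalIntegral.integral_const_mul]
        have i5 : IntervalIntegrable (fun t : ℝ => t)
            MeasureTheory.volume (m - 1/2) (m + 1/2) := by
          apply Continuous.intervalIntegrable; continuity
        have : (∫ t in (m - 1/2)..(m + 1/2), (t - m)) = 0 := by
          rw [intervalIntegral.integral_sub i5 intervalIntegrable_const,
            integral_id, intervalIntegral.integral_const, smul_eq_mul]
          ring_nf
        rw [this, mul_zero]
      rw [e3, intervalIntegral.integral_const, smul_eq_mul]
      ring_nf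
    rw [e2]
  rw [hint]
  have hfin := intervalIntegral.norm_integral_le_of_norm_le_const
    (a := m - 1/2) (b := m + 1/2) (C := Mb c / 4)
    (f := fun t : ℝ => (fl c t - fl' c m * (t - m)) - fl c m) ?_
  · simp only [Real.norm_eq_abs] at hfin
    calc |∫ t in (m - 1/2)..(m + 1/2), ((fl c t - fl' c m * (t - m)) - fl c m)|
        ≤ Mb c / 4 * |(m + 1/2) - (m - 1/2)| := hfin
      _ = Mb c / 4 := by norm_num
  · intro t ht
    have htI : t ∈ I := by
      rw [Set.uIoc_of_le (by linarith : m - 1/2 ≤ m + 1/2)] at ht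
      exact Set.Ioc_subset_Icc_self ht
    simpa using hg t htI
end d

lemma sum_cells {c : ℝ} (hc : 0 < c) (n : ℕ) :
    |(∑ k ∈ Finset.range n, fl c ((k : ℝ) + 1)) - ∫ t in (1/2 : ℝ)..((n : ℝ) + 1/2), fl c t|
      ≤ n * (Mb c / 4) := by
  set a : ℕ → ℝ := fun k => 1/2 + k with ha
  have hI : ∀ k < n, IntervalIntegrable (fl c) MeasureTheory.volume (a k) (a (k+1)) :=
    fun k _ => (continuous_fl hc).intervalIntegrable _ _
  have hsum := intervalIntegral.sum_integral_adjacent_intervals hI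
  have ha0 : a 0 = 1/2 := by simp [ha]
  have han : a n = (n : ℝ) + 1/2 := by simp [ha]; ring
  rw [ha0, han] at hsum
  rw [← hsum, ← Finset.sum_sub_distrib]
  calc |∑ k ∈ Finset.range n, (fl c ((k : ℝ) + 1) - ∫ t in a k..a (k+1), fl c t)|
      ≤ ∑ k ∈ Finset.range n, |fl c ((k : ℝ) + 1) - ∫ t in a k..a (k+1), fl c t| :=
        Finset.abs_sum_le_sum_abs _ _
    _ ≤ ∑ _k ∈ Finset.range n, Mb c / 4 := by
        apply Finset.sum_le_sum
        intro k _
        have h := cell_err hc ((k : ℝ) + 1)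
        have e1 : a k = ((k : ℝ) + 1) - 1/2 := by simp [ha]; ring
        have e2 : a (k+1) = ((k : ℝ) + 1) + 1/2 := by push_cast [ha]; ring
        rw [e1, e2]
        rw [abs_sub_comm]
        exact h
    _ = n * (Mb c / 4) := by rw [Finset.sum_const, Finset.card_range]; ring

lemma loglin {y : ℝ} (hy : |y| ≤ 1/2) : |Real.log (1+y) - y| ≤ 2*y^2 := by
  have h1 : -(1/2) ≤ y := by have := neg_abs_le y; linarith
  have h2 : y ≤ 1/2 := le_trans (le_abs_self y) hy
  have hpos : 0 < 1 + y := by linarith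
  have hub : Real.log (1+y) ≤ y := by
    have := Real.log_le_sub_one_of_pos hpos; linarith
  have hlb : y - 2*y^2 ≤ Real.log (1+y) := by
    have hinv : Real.log (1+y)⁻¹ ≤ (1+y)⁻¹ - 1 := Real.log_le_sub_one_of_pos (by positivity)
    rw [Real.log_inv] at hinv
    have : (1+y)⁻¹ - 1 = -y/(1+y) := by field_simp; ring
    rw [this] at hinv
    have h3 : -Real.log (1+y) ≤ -y/(1+y) := hinv
    have h4 : -y/(1+y) ≤ -y + 2*y^2 := by
      rw [div_le_iff₀ hpos]
      nlinarith [sq_nonneg y]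
    linarith
  rw [abs_le]
  constructor <;> nlinarith [sq_nonneg y]

section endpoints
variable {c x : ℝ} (hc : 0 < c)
include hc

lemma sD_le_of_gt (hd : 0 < x - c) : sD c x ≤ (x - c) + 2*c/(x-c) := by
  have key : ((x-c) + 2*c/(x-c))^2 = (x-c)^2 + 4*c + (2*c/(x-c))^2 := by
    field_simp; ring
  have h1 : (x-c)^2 + 4*c ≤ ((x-c) + 2*c/(x-c))^2 := by
    rw [key]; nlinarith [sq_nonneg (2*c/(x-c))]
  calc sD c x ≤ Real.sqrt (((x-c) + 2*c/(x-c))^2) := Real.sqrt_le_sqrt h1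
    _ = (x-c) + 2*c/(x-c) := Real.sqrt_sq (by positivity)

lemma t_lower (hd : 0 < x - c) : x - c ≤ lm c x - c := by
  have h := abs_lt_sD (x := x) hc
  have h2 := le_abs_self (x - c)
  unfold lm; linarith

lemma t_upper (hd : 0 < x - c) : lm c x - c ≤ (x - c) + c/(x-c) := by
  have h := sD_le_of_gt hc hd
  unfold lm at *; have : 2*c/(x-c) = 2*(c/(x-c)) := by ring
  linarith [this ▸ h]

lemma lm_sub_eq : lm c x - x = c / (lm c x - c) := by
  have h := lm_xc (x := x) hc
  have hne := (lm_sub_c_pos (x := x) hc).ne'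
  field_simp
  linear_combination h

lemma A_upper (hc2 : 2 ≤ c) : lm c (1/2) ≤ c + 1 := by
  have hs : sD c (1/2) ≤ c + 3/2 := by
    have h1 : ((1:ℝ)/2 - c)^2 + 4*c ≤ (c + 3/2)^2 := by nlinarith
    calc sD c (1/2) ≤ Real.sqrt ((c+3/2)^2) := Real.sqrt_le_sqrt h1
      _ = c + 3/2 := Real.sqrt_sq (by linarith)
  unfold lm; linarith

lemma A_lower (hc2 : 2 ≤ c) : c + 1 - 1/c ≤ lm c (1/2) := by
  have h7 : 2/c ≤ 1 := by rw [div_le_one (by linarith)]; linarith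
  have h8 : 0 < 1/c := by positivity
  have hcc : 0 < c^2 := by positivity
  have h6 : 4/c^2 ≤ 2/c := by
    rw [div_le_div_iff₀ hcc (by linarith : (0:ℝ) < c)]; nlinarith
  have hs : c + 3/2 - 2/c ≤ sD c (1/2) := by
    rw [show sD c (1/2) = Real.sqrt (((1:ℝ)/2 - c)^2 + 4*c) from rfl]
    rw [Real.le_sqrt (by linarith) (by positivity)]
    have e : (c + 3/2 - 2/c)^2 = c^2 + 3*c + 9/4 - 4 - 6/c + 4/c^2 := by
      field_simp; ring
    rw [e]
    have e2 : ((1:ℝ)/2 - c)^2 + 4*c = c^2 + 3*c + 1/4 := by ring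
    have e3 : (6:ℝ)/c = 3*(2/c) := by ring
    have h9 : (0:ℝ) ≤ 2/c := by positivity
    rw [e2]
    linarith [h6, e3, h9]
  have e2 : 2/c = 2*(1/c) := by ring
  unfold lm
  linarith
end endpoints

lemma lamPlus_eq_lm (r : ℝ) (hr0 : 0 < r) {N : ℕ} (hN : 1 ≤ N) (n : ℕ) :
    lamPlus r N n = lm ((N:ℝ) * r^2) ((n:ℝ) + 1) := by
  have hN0 : (0:ℝ) < (N:ℝ) := by exact_mod_cast hN
  have key : (N:ℝ) * Real.sqrt ((((n:ℝ)+1)/(N:ℝ) - r^2)^2 + 4*r^2/(N:ℝ))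
      = Real.sqrt ((((n:ℝ)+1) - (N:ℝ)*r^2)^2 + 4*((N:ℝ)*r^2)) := by
    rw [show (N:ℝ) * Real.sqrt ((((n:ℝ)+1)/(N:ℝ) - r^2)^2 + 4*r^2/(N:ℝ))
        = Real.sqrt ((N:ℝ)^2) * Real.sqrt ((((n:ℝ)+1)/(N:ℝ) - r^2)^2 + 4*r^2/(N:ℝ)) by
      rw [Real.sqrt_sq hN0.le]]
    rw [← Real.sqrt_mul (by positivity)]
    congr 1
    field_simp
  unfold lamPlus lm sD
  rw [show ((n:ℝ)+1 - (N:ℝ)*r^2)^2 + 4*((N:ℝ)*r^2) = (((n:ℝ)+1) - (N:ℝ)*r^2)^2 + 4*((N:ℝ)*r^2) by ring]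
  rw [← key]
  field_simp

set_option maxHeartbeats 1000000 in
/-- Asymptotics of the product of leading transfer-matrix eigenvalues:
`Π_{n=0}^{N-2} λ_n^+ ∼ e · r(1 - r²) · N^N e^{-N(1 - r²)}` as `N → ∞`,
for fixed `0 < r < 1`. -/
theorem ginibre_transfer_eigenvalue_product_asymptotics (r : ℝ)
    (hr0 : 0 < r) (hr1 : r < 1) :
    Tendsto (fun N : ℕ =>
        (∏ n ∈ Finset.range (N - 1), lamPlus r N n) /
          (Real.exp 1 * r * (1 - r ^ 2) * (N : ℝ) ^ N *
            Real.exp (-(N * (1 - r ^ 2)))))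
      atTop (nhds 1) := by
  have hq0 : 0 < r^2 := by positivity
  have hq1 : r^2 < 1 := by nlinarith
  have h1q : 0 < 1 - r^2 := by linarith
  set q : ℝ := r^2 with hqdef
  set c : ℕ → ℝ := fun N => (N:ℝ) * q with hcdef
  set L : ℕ → ℝ := fun N => lm (c N) ((N:ℝ) - 1/2) with hLdef
  set A : ℕ → ℝ := fun N => lm (c N) (1/2) with hAdef
  set w : ℕ → ℝ := fun N => L N - (N:ℝ) with hwdef
  set dd : ℕ → ℝ := fun N => (N:ℝ)*(1-q) - 1/2 with hdddef
  set u : ℕ → ℝ := fun N => c N / dd N with hudef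
  set T : ℕ → ℝ := fun N =>
    1 + Real.log r + Real.log (1-q) + (N:ℝ) * Real.log N - (N:ℝ)*(1-q) with hTdef
  set S : ℕ → ℝ := fun N => ∑ k ∈ Finset.range (N-1), fl (c N) ((k:ℝ)+1) with hSdef
  set uinf : ℝ := q/(1-q) with huinfdef
  set el : ℕ → ℝ := fun N => Real.log (L N / (N:ℝ)) with heldef
  -- basic tendsto facts
  have hNat : Tendsto (fun N : ℕ => (N:ℝ)) atTop atTop := tendsto_natCast_atTop_atTop
  have hinvN : Tendsto (fun N : ℕ => 1/(N:ℝ)) atTop (nhds 0) :=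
    tendsto_one_div_atTop_nhds_zero_nat
  have hcTop : Tendsto c atTop atTop := hNat.atTop_mul_const hq0
  have hddTop : Tendsto dd atTop atTop := by
    have h := tendsto_atTop_add_const_right atTop (-(1/2):ℝ) (hNat.atTop_mul_const h1q)
    simp only [hdddef, sub_eq_add_neg]
    exact h
  have hinvc : Tendsto (fun N => 1/(c N)) atTop (nhds 0) := by
    simpa [one_div, Pi.inv_def] using hcTop.inv_tendsto_atTop
  have hinvdd : Tendsto (fun N => 1/(dd N)) atTop (nhds 0) := by
    simpa [one_div, Pi.inv_def] using hddTop.inv_tendsto_atTop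
  -- eventual bounds
  have hev2 : ∀ᶠ N : ℕ in atTop, 2 ≤ c N := hcTop.eventually_ge_atTop 2
  have hevd : ∀ᶠ N : ℕ in atTop, 1 ≤ dd N := hddTop.eventually_ge_atTop 1
  have hevN1 : ∀ᶠ N : ℕ in atTop, 1 ≤ N := eventually_ge_atTop 1
  -- u tends to uinf
  have hu : Tendsto u atTop (nhds uinf) := by
    have h2N : Tendsto (fun N : ℕ => 1/(2*(N:ℝ))) atTop (nhds 0) := by
      have h := hinvN.div_const 2
      have e : (fun N : ℕ => 1/(N:ℝ)/2) = (fun N : ℕ => 1/(2*(N:ℝ))) := by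
        funext N; ring
      rw [show (0:ℝ)/2 = 0 by norm_num] at h
      rwa [e] at h
    have hden : Tendsto (fun N : ℕ => (1-q) - 1/(2*(N:ℝ))) atTop (nhds (1-q)) := by
      simpa using tendsto_const_nhds.sub h2N
    have hlim : Tendsto (fun N : ℕ => q / ((1-q) - 1/(2*(N:ℝ)))) atTop (nhds uinf) :=
      tendsto_const_nhds.div hden h1q.ne'
    apply hlim.congr'
    filter_upwards [hevd, hevN1] with N hd h1
    have hN0 : (0:ℝ) < (N:ℝ) := by exact_mod_cast Nat.pos_of_ne_zero (by omega)
    have hX : dd N = (N:ℝ) * ((1-q) - 1/(2*(N:ℝ))) := by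
      simp only [hdddef]; field_simp
    simp only [hudef, hcdef, hX]
    rw [mul_div_mul_left _ _ hN0.ne']
  -- L - c bounds
  have hLcb : ∀ᶠ N : ℕ in atTop, dd N ≤ L N - c N ∧ L N - c N ≤ dd N + u N := by
    filter_upwards [hev2, hevd] with N h2 hd
    have hc0 : (0:ℝ) < c N := by linarith
    have hbx : ((N:ℝ) - 1/2) - c N = dd N := by simp only [hdddef, hcdef]; ring
    have hx : (0:ℝ) < ((N:ℝ) - 1/2) - c N := by rw [hbx]; linarith
    constructor
    · have := t_lower (x := (N:ℝ) - 1/2) hc0 hx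
      rw [hbx] at this; exact this
    · have := t_upper (x := (N:ℝ) - 1/2) hc0 hx
      rw [hbx] at this
      simp only [hudef]
      linarith
  -- w bounds and limit
  have hwev : ∀ᶠ N : ℕ in atTop,
      u N - u N^2 * (1/dd N) - 1/2 ≤ w N ∧ w N ≤ u N - 1/2 := by
    filter_upwards [hev2, hevd, hLcb] with N h2 hd hb
    have hc0 : (0:ℝ) < c N := by linarith
    have hdd0 : (0:ℝ) < dd N := by linarith
    obtain ⟨ht1, ht2⟩ := hb
    have hLx : L N - ((N:ℝ) - 1/2) = c N / (L N - c N) :=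
      lm_sub_eq (x := (N:ℝ) - 1/2) hc0
    have hLc0 : (0:ℝ) < L N - c N := lm_sub_c_pos hc0
    have hu0 : 0 < u N := by simp only [hudef]; positivity
    have hweq : w N = c N / (L N - c N) - 1/2 := by
      simp only [hwdef]; rw [show L N - (N:ℝ) = (L N - ((N:ℝ) - 1/2)) - 1/2 by ring, hLx]
    constructor
    · rw [hweq]
      have e2 : u N * dd N = c N := by
        simp only [hudef]; field_simp
      have hstep : u N - u N^2 * (1/dd N) ≤ c N / (dd N + u N) := by
        rw [le_div_iff₀ (by linarith)]
        have h1dd : 1/dd N * dd N = 1 := by field_simp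
        have key : (u N - u N^2*(1/dd N))*(dd N + u N) = c N - u N^3 * (1/dd N) := by
          have e4 : (u N - u N^2*(1/dd N))*(dd N + u N)
              = u N * dd N + u N^2 * (1 - (1/dd N)*dd N) - u N^3*(1/dd N) := by ring
          rw [e4, h1dd, e2]; ring
        have hnn : 0 ≤ u N^3 * (1/dd N) := by positivity
        linarith [key]
      have hstep2 : c N / (dd N + u N) ≤ c N / (L N - c N) :=
        div_le_div_of_nonneg_left hc0.le hLc0 ht2
      linarith
    · rw [hweq]
      have : c N / (L N - c N) ≤ c N / dd N :=
        div_le_div_of_nonneg_left hc0.le hdd0 ht1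
      simp only [hudef]; linarith
  have hw : Tendsto w atTop (nhds (uinf - 1/2)) := by
    apply tendsto_of_tendsto_of_tendsto_of_le_of_le'
      (g := fun N => u N - u N^2 * (1/dd N) - 1/2) (h := fun N => u N - 1/2)
    · have h1 : Tendsto (fun N => u N^2 * (1/dd N)) atTop (nhds 0) := by
        have := (hu.mul hu).mul hinvdd
        simpa [sq] using this
      have := (hu.sub h1).sub_const (1/2)
      simpa using this
    · simpa using hu.sub_const (1/2)
    · exact hwev.mono fun N h => h.1
    · exact hwev.mono fun N h => h.2
  -- w eventually bounded
  set K : ℝ := |uinf - 1/2| + 1 with hKdef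
  have hK0 : 0 < K := by positivity
  have hwb : ∀ᶠ N : ℕ in atTop, |w N| ≤ K := by
    have h := Metric.tendsto_nhds.mp hw 1 one_pos
    filter_upwards [h] with N hN
    rw [Real.dist_eq] at hN
    have := abs_sub_abs_le_abs_sub (w N) (uinf - 1/2)
    simp only [hKdef]
    linarith
  -- L/N tends to 1
  have hLN : Tendsto (fun N : ℕ => L N / (N:ℝ)) atTop (nhds 1) := by
    have h0 : Tendsto (fun N : ℕ => w N * (1/(N:ℝ))) atTop (nhds 0) := by
      simpa using hw.mul hinvN
    have h1 : Tendsto (fun N : ℕ => 1 + w N * (1/(N:ℝ))) atTop (nhds 1) := by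
      simpa using tendsto_const_nhds.add h0
    apply h1.congr'
    filter_upwards [hevN1] with N h1'
    have hN0 : (0:ℝ) < (N:ℝ) := by exact_mod_cast Nat.pos_of_ne_zero (by omega)
    simp only [hwdef]
    field_simp; ring
  have hel : Tendsto el atTop (nhds 0) := by
    have h := (Real.continuousAt_log one_ne_zero).tendsto.comp hLN
    simp only [heldef]
    simpa [Function.comp_def] using h
  -- N * el - w tends to 0
  have hNel : Tendsto (fun N : ℕ => (N:ℝ) * el N - w N) atTop (nhds 0) := by
    apply squeeze_zero_norm' (a := fun N : ℕ => 2*K^2 * (1/(N:ℝ)))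
    · filter_upwards [hwb, hevN1, eventually_ge_atTop (max 1 (Nat.ceil (2*K)))]
        with N hb h1 hKN
      have hN0 : (0:ℝ) < (N:ℝ) := by exact_mod_cast Nat.pos_of_ne_zero (by omega)
      have hNK : 2*K ≤ (N:ℝ) := by
        have h3 : (Nat.ceil (2*K) : ℝ) ≤ (N:ℝ) := by
          exact_mod_cast le_trans (le_max_right 1 (Nat.ceil (2*K))) hKN
        linarith [Nat.le_ceil (2*K)]
      have hy : |w N / (N:ℝ)| ≤ 1/2 := by
        rw [abs_div, abs_of_pos hN0, div_le_iff₀ hN0]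
        nlinarith [hb, hNK]
      have hLNy : L N / (N:ℝ) = 1 + w N / (N:ℝ) := by
        simp only [hwdef]; field_simp; ring
      have hkey := loglin hy
      have e : (N:ℝ) * el N - w N = (N:ℝ) * (Real.log (1 + w N / (N:ℝ)) - w N / (N:ℝ)) := by
        simp only [heldef, hLNy]
        field_simp
      rw [e, Real.norm_eq_abs, abs_mul, abs_of_pos hN0]
      have hw2 : (w N)^2 ≤ K^2 := by
        rw [← sq_abs]
        apply pow_le_pow_left₀ (abs_nonneg _) hb
      calc (N:ℝ) * |Real.log (1 + w N/(N:ℝ)) - w N/(N:ℝ)| ≤ (N:ℝ) * (2*(w N/(N:ℝ))^2) :=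
            mul_le_mul_of_nonneg_left hkey hN0.le
        _ = (2 * (w N)^2) * (1/(N:ℝ)) := by field_simp
        _ ≤ (2*K^2) * (1/(N:ℝ)) := by
            have hN1 : (0:ℝ) ≤ 1/(N:ℝ) := by positivity
            have h5 : 2*(w N)^2 ≤ 2*K^2 := by nlinarith [hw2]
            exact mul_le_mul_of_nonneg_right h5 hN1
        _ = 2*K^2 * (1/(N:ℝ)) := by ring
    · simpa using hinvN.const_mul (2*K^2)
  -- A bounds
  have hAc : Tendsto (fun N => A N - c N) atTop (nhds 1) := by
    apply tendsto_of_tendsto_of_tendsto_of_le_of_le'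
      (g := fun N => 1 - 1/(c N)) (h := fun _ => (1:ℝ))
    · simpa using tendsto_const_nhds.sub hinvc
    · exact tendsto_const_nhds
    · filter_upwards [hev2] with N h2
      have := A_lower (c := c N) (by linarith) h2
      simp only [hAdef]; linarith
    · filter_upwards [hev2] with N h2
      have := A_upper (c := c N) (by linarith) h2
      simp only [hAdef]; linarith
  have hlogAc : Tendsto (fun N => Real.log (A N - c N)) atTop (nhds 0) := by
    have h := (Real.continuousAt_log one_ne_zero).tendsto.comp hAc
    simpa [Function.comp_def] using h
  -- A / c tends to 1
  have hAq : Tendsto (fun N => A N / c N) atTop (nhds 1) := by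
    apply tendsto_of_tendsto_of_tendsto_of_le_of_le'
      (g := fun N => 1 + 1/(c N) - 1/(c N) * (1/(c N))) (h := fun N => 1 + 1/(c N))
    · have h : Tendsto (fun N : ℕ => 1 + 1/(c N) - 1/(c N) * (1/(c N))) atTop
          (nhds (1 + 0 - 0 * 0)) :=
        (tendsto_const_nhds.add hinvc).sub (hinvc.mul hinvc)
      simpa using h
    · simpa using tendsto_const_nhds.add hinvc
    · filter_upwards [hev2] with N h2
      have hc0 : (0:ℝ) < c N := by linarith
      have hA := A_lower (c := c N) (by linarith) h2
      have e : 1 + 1/(c N) - 1/(c N)*(1/(c N)) = (c N + 1 - 1/(c N))/(c N) := by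
        field_simp
      rw [e]
      exact div_le_div_of_nonneg_right hA hc0.le
    · filter_upwards [hev2] with N h2
      have hc0 : (0:ℝ) < c N := by linarith
      have hA := A_upper (c := c N) (by linarith) h2
      have e : 1 + 1/(c N) = (c N + 1)/(c N) := by field_simp
      rw [e]
      exact div_le_div_of_nonneg_right hA hc0.le
  have hlogAq : Tendsto (fun N => Real.log (A N / c N)) atTop (nhds 0) := by
    have h := (Real.continuousAt_log one_ne_zero).tendsto.comp hAq
    simpa [Function.comp_def] using h
  -- (L-c)/(N(1-q)) tends to 1
  have hLcN : Tendsto (fun N : ℕ => (L N - c N)/((N:ℝ)*(1-q))) atTop (nhds 1) := by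
    have hglim : Tendsto (fun N : ℕ => 1 - (1/(2*(1-q)))*(1/(N:ℝ))) atTop (nhds 1) := by
      simpa using tendsto_const_nhds.sub (hinvN.const_mul (1/(2*(1-q))))
    have hhlim : Tendsto
        (fun N : ℕ => 1 - (1/(2*(1-q)))*(1/(N:ℝ)) + u N * (1/(N:ℝ)) / (1-q))
        atTop (nhds 1) := by
      have h0 : Tendsto (fun N : ℕ => u N * (1/(N:ℝ)) / (1-q)) atTop (nhds 0) := by
        have := (hu.mul hinvN).div_const (1-q)
        simpa using this
      simpa using hglim.add h0
    apply tendsto_of_tendsto_of_tendsto_of_le_of_le' hglim hhlim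
    · filter_upwards [hLcb, hevN1] with N hb h1
      have hN0 : (0:ℝ) < (N:ℝ) := by exact_mod_cast Nat.pos_of_ne_zero (by omega)
      have e : 1 - (1/(2*(1-q)))*(1/(N:ℝ)) = dd N / ((N:ℝ)*(1-q)) := by
        simp only [hdddef]; field_simp
      rw [e]
      exact div_le_div_of_nonneg_right hb.1 (by positivity)
    · filter_upwards [hLcb, hevN1] with N hb h1
      have hN0 : (0:ℝ) < (N:ℝ) := by exact_mod_cast Nat.pos_of_ne_zero (by omega)
      have e : 1 - (1/(2*(1-q)))*(1/(N:ℝ)) + u N * (1/(N:ℝ)) / (1-q)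
          = (dd N + u N) / ((N:ℝ)*(1-q)) := by
        simp only [hdddef]; field_simp
      rw [e]
      exact div_le_div_of_nonneg_right hb.2 (by positivity)
  have hlogLc : Tendsto (fun N : ℕ => Real.log ((L N - c N)/((N:ℝ)*(1-q))))
      atTop (nhds 0) := by
    have h := (Real.continuousAt_log one_ne_zero).tendsto.comp hLcN
    simpa [Function.comp_def] using h
  -- E2
  have hE2 : Tendsto
      (fun N : ℕ => (Fa (c N) ((N:ℝ) - 1/2) - Fa (c N) (1/2)) - T N) atTop (nhds 0) := by
    have hXlim : Tendsto (fun N : ℕ =>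
        (((N:ℝ) * el N - w N) + w N - (3/2) * el N)
        + Real.log ((L N - c N)/((N:ℝ)*(1-q)))
        + (1/2) * Real.log (A N / c N)
        - Real.log (A N - c N)
        - w N + (A N - c N) - 1) atTop (nhds 0) := by
      have h1 := ((hNel.add hw).sub (hel.const_mul (3/2) |> fun h => by
        simpa [mul_comm] using hel.const_mul (3/2)))
      have base := ((((((hNel.add hw).sub (by
          simpa using hel.const_mul (3/2))).add hlogLc).add
          (by simpa using hlogAq.const_mul (1/2))).sub hlogAc).sub hw).add hAc
      have base2 := base.sub_const 1
      have : (0 + (uinf - 1/2) - 0 + 0 + 0 - 0 - (uinf - 1/2) + 1) - 1 = 0 := by ring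
      rw [this] at base2
      apply base2.congr
      intro N
      ring
    apply hXlim.congr'
    filter_upwards [hev2, hevd, hevN1] with N h2 hd h1
    have hc0 : (0:ℝ) < c N := by linarith
    have hN0 : (0:ℝ) < (N:ℝ) := by exact_mod_cast Nat.pos_of_ne_zero (by omega)
    have hL0 : (0:ℝ) < L N := lm_pos hc0
    have hA0 : (0:ℝ) < A N := lm_pos hc0
    have hLc0 : (0:ℝ) < L N - c N := lm_sub_c_pos hc0
    have hAc0 : (0:ℝ) < A N - c N := lm_sub_c_pos hc0
    have e1 : el N = Real.log (L N) - Real.log (N:ℝ) := by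
      simp only [heldef]
      exact Real.log_div hL0.ne' hN0.ne'
    have e2 : Real.log ((L N - c N)/((N:ℝ)*(1-q)))
        = Real.log (L N - c N) - Real.log (N:ℝ) - Real.log (1-q) := by
      rw [Real.log_div hLc0.ne' (by positivity), Real.log_mul hN0.ne' h1q.ne']
      ring
    have e3 : Real.log (A N / c N)
        = Real.log (A N) - Real.log (N:ℝ) - 2 * Real.log r := by
      rw [Real.log_div hA0.ne' hc0.ne']
      have : Real.log (c N) = Real.log (N:ℝ) + 2 * Real.log r := by
        simp only [hcdef]
        rw [Real.log_mul hN0.ne' hq0.ne', hqdef]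
        rw [show r^2 = r^(2:ℕ) by norm_num, Real.log_pow]
        push_cast; ring
      rw [this]; ring
    have eFa1 : Fa (c N) ((N:ℝ) - 1/2)
        = ((N:ℝ) - 1/2 - 1) * Real.log (L N) - L N + Real.log (L N - c N) := by
      simp only [Fa, hLdef]
    have eFa2 : Fa (c N) (1/2)
        = (1/2 - 1) * Real.log (A N) - A N + Real.log (A N - c N) := by
      simp only [Fa, hAdef]
    rw [e1, e2, e3, eFa1, eFa2]
    simp only [hTdef, hwdef]
    ring
  -- E1
  have hE1 : Tendsto
      (fun N : ℕ => S N - (Fa (c N) ((N:ℝ) - 1/2) - Fa (c N) (1/2))) atTop (nhds 0) := by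
    apply squeeze_zero_norm' (a := fun N : ℕ => (N:ℝ) * (Mb (c N)/4))
    · filter_upwards [hev2, hevN1] with N h2 h1
      have hc0 : (0:ℝ) < c N := by linarith
      have hsc := sum_cells hc0 (N-1)
      have hcast : ((N-1 : ℕ):ℝ) = (N:ℝ) - 1 := by
        push_cast [h1]; ring
      rw [hcast] at hsc
      rw [show ((N:ℝ)-1) + 1/2 = (N:ℝ) - 1/2 by ring] at hsc
      rw [integral_fl hc0 (1/2) ((N:ℝ)-1/2)] at hsc
      have hMb := Mb_nonneg hc0
      rw [Real.norm_eq_abs]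
      simp only [hSdef]
      calc |(∑ k ∈ Finset.range (N-1), fl (c N) ((k:ℝ)+1))
            - (Fa (c N) ((N:ℝ) - 1/2) - Fa (c N) (1/2))|
          ≤ ((N:ℝ) - 1) * (Mb (c N)/4) := hsc
        _ ≤ (N:ℝ) * (Mb (c N)/4) := by
            have : (N:ℝ) - 1 ≤ (N:ℝ) := by linarith
            have h4 : 0 ≤ Mb (c N)/4 := by linarith
            exact mul_le_mul_of_nonneg_right this h4
    · -- N * Mb(c N)/4 → 0
      have hinvsq : Tendsto (fun N => 1/Real.sqrt (c N)) atTop (nhds 0) := by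
        have h := (Real.continuous_sqrt.tendsto 0).comp hinvc
        have e : (fun N : ℕ => Real.sqrt (1/(c N))) = fun N => 1/Real.sqrt (c N) := by
          funext N
          rw [one_div, one_div, Real.sqrt_inv]
        rw [show Real.sqrt 0 = 0 from Real.sqrt_zero] at h
        rw [← e]
        exact h
      have hlim : Tendsto (fun N : ℕ =>
          (1/(16*q)) * (1/Real.sqrt (c N)) + (1/(4*q^2)) * (1/(N:ℝ)))
          atTop (nhds 0) := by
        have := (hinvsq.const_mul (1/(16*q))).add (hinvN.const_mul (1/(4*q^2)))
        simpa using this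
      apply hlim.congr'
      filter_upwards [hev2, hevN1] with N h2 h1
      have hc0 : (0:ℝ) < c N := by linarith
      have hN0 : (0:ℝ) < (N:ℝ) := by exact_mod_cast Nat.pos_of_ne_zero (by omega)
      have hs0 : (0:ℝ) < Real.sqrt (c N) := Real.sqrt_pos.2 hc0
      have hss : Real.sqrt (c N) * Real.sqrt (c N) = c N := Real.mul_self_sqrt hc0.le
      simp only [Mb, hcdef] at *
      field_simp
      nlinarith [hss, hs0, hN0, hq0]
  -- combine
  have hST : Tendsto (fun N : ℕ => S N - T N) atTop (nhds 0) := by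
    have h := hE1.add hE2
    have e : (fun N : ℕ => (S N - (Fa (c N) ((N:ℝ) - 1/2) - Fa (c N) (1/2)))
        + ((Fa (c N) ((N:ℝ) - 1/2) - Fa (c N) (1/2)) - T N)) = fun N => S N - T N := by
      funext N; ring
    rw [e] at h
    simpa using h
  have hexp : Tendsto (fun N : ℕ => Real.exp (S N - T N)) atTop (nhds 1) := by
    have h := (Real.continuous_exp.tendsto 0).comp hST
    simpa [Function.comp_def] using h
  apply hexp.congr'
  filter_upwards [hev2, hevN1] with N h2 h1
  have hc0 : (0:ℝ) < c N := by linarith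
  have hN0 : (0:ℝ) < (N:ℝ) := by exact_mod_cast Nat.pos_of_ne_zero (by omega)
  have hprod : Real.exp (S N) = ∏ n ∈ Finset.range (N-1), lamPlus r N n := by
    simp only [hSdef]
    rw [Real.exp_sum]
    apply Finset.prod_congr rfl
    intro k _
    rw [show fl (c N) ((k:ℝ)+1) = Real.log (lm (c N) ((k:ℝ)+1)) from rfl]
    rw [Real.exp_log (lm_pos hc0)]
    exact (lamPlus_eq_lm r hr0 h1 k).symm
  have hden : Real.exp (T N)
      = Real.exp 1 * r * (1-q) * (N:ℝ)^N * Real.exp (-((N:ℝ)*(1-q))) := by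
    simp only [hTdef]
    rw [show (1 : ℝ) + Real.log r + Real.log (1-q) + (N:ℝ)*Real.log (N:ℝ) - (N:ℝ)*(1-q)
      = (((1 + Real.log r) + Real.log (1-q)) + (N:ℝ)*Real.log (N:ℝ)) + (-((N:ℝ)*(1-q))) by
        ring]
    rw [Real.exp_add, Real.exp_add, Real.exp_add, Real.exp_add]
    rw [Real.exp_log hr0, Real.exp_log h1q, Real.exp_nat_mul, Real.exp_log hN0]
  rw [Real.exp_sub, hprod, hden]
end
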